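/- arXiv:1904.00006 — 2 statements merged into one kernel-verified Lean document; each statement's English description precedes it below -/
import Mathlib

section
/- For i ∈ {0,1}, all a ≠ b in {1,…,N} and all z_1,…,z_N ∈ ℂ, the vector Ω^i annihilates the difference of anticommutators: Ω^i ⬝ (({∑_{j=1}^N z_j e^{(j)}_{aa}, (−1)^{p(b)}(E_{ab}E_{ba} − E_{aa})} − {∑_{j=1}^N z_j e^{(j)}_{bb}, (−1)^{p(a)}(E_{ba}E_{ab} − E_{bb})}) v) = 0 for every v ∈ V, where {X,Y} := XY + YX and ⬝ is the standard (bilinear, unconjugated) pairing on ℂ^{N^N}. -/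
open Finset

namespace Glnm

/-- Parity: `p(a) = 0` for bosonic indices (`a ≤ n` in 1-based terms, i.e. `a.val < n`),
`p(a) = 1` for fermionic ones. -/
def par (n N : ℕ) (a : Fin N) : ℕ := if (a : ℕ) < n then 0 else 1

/-- The Koszul-sign realization `e^{(j)}_{ab} = σ^{p(a)+p(b)} ⊗ ⋯ ⊗ σ^{p(a)+p(b)} ⊗ e_{ab} ⊗ I ⊗ ⋯ ⊗ I`
on `(ℂ^N)^{⊗k}`, realized as matrices indexed by tuples `Fin k → Fin N`. -/
noncomputable def eop (n N k : ℕ) (j : Fin k) (a b : Fin N) :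
    Matrix (Fin k → Fin N) (Fin k → Fin N) ℂ :=
  fun x y =>
    (if x j = a ∧ y j = b then (1 : ℂ) else 0) *
      (-1 : ℂ) ^ ((par n N a + par n N b) *
        ∑ l ∈ Finset.univ.filter (fun l : Fin k => l < j), par n N (x l)) *
      ∏ l ∈ Finset.univ.filter (fun l : Fin k => l ≠ j),
        (if x l = y l then (1 : ℂ) else 0)

/-- `E_{ab} = ∑_{j=1}^k e^{(j)}_{ab}`. -/
noncomputable def Egen (n N k : ℕ) (a b : Fin N) : Matrix (Fin k → Fin N) (Fin k → Fin N) ℂ :=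
  ∑ j : Fin k, eop n N k j a b

/-- The graded permutation `P_{ij} = ∑_{a,b} (−1)^{p(b)} e^{(i)}_{ab} e^{(j)}_{ba}`. -/
noncomputable def Pg (n N k : ℕ) (i j : Fin k) : Matrix (Fin k → Fin N) (Fin k → Fin N) ℂ :=
  ∑ a : Fin N, ∑ b : Fin N,
    ((-1 : ℂ) ^ par n N b) • (eop n N k i a b * eop n N k j b a)

/-- Commutator. -/
def comm {α : Type*} [Ring α] (X Y : α) : α := X * Y - Y * X

/-- Anticommutator. -/
def acomm {α : Type*} [Ring α] (X Y : α) : α := X * Y + Y * X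

/-- The dynamical connection matrix
`A_a = ∑_j z_j e^{(j)}_{aa} + ∑_{b ≠ a} (−1)^{p(b)} (E_{ab}E_{ba} − E_{aa})/(λ_a − λ_b)`. -/
noncomputable def dynA (n N k : ℕ) (z : Fin k → ℂ) (lam : Fin N → ℂ) (a : Fin N) :
    Matrix (Fin k → Fin N) (Fin k → Fin N) ℂ :=
  (∑ j : Fin k, z j • eop n N k j a a) +
    ∑ b ∈ Finset.univ.filter (fun b : Fin N => b ≠ a),
      (((-1 : ℂ) ^ par n N b) / (lam a - lam b)) •
        (Egen n N k a b * Egen n N k b a - Egen n N k a a)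

/-- The (twisted) KZ connection matrix
`B_i = ∑_c λ_c e^{(i)}_{cc} + ∑_{j ≠ i} P_{ij}/(z_i − z_j)`. -/
noncomputable def kzB (n N k : ℕ) (z : Fin k → ℂ) (lam : Fin N → ℂ) (i : Fin k) :
    Matrix (Fin k → Fin N) (Fin k → Fin N) ℂ :=
  (∑ c : Fin N, lam c • eop n N k i c c) +
    ∑ j ∈ Finset.univ.filter (fun j : Fin k => j ≠ i),
      ((z i - z j)⁻¹) • Pg n N k i j

/-- Adjacent graded permutation `P_{s_l} = P_{l,l+1}` (0-based slots). -/
noncomputable def Ps (n N k : ℕ) (l : ℕ) (h : l + 1 < k) :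
    Matrix (Fin k → Fin N) (Fin k → Fin N) ℂ :=
  Pg n N k ⟨l, Nat.lt_of_succ_lt h⟩ ⟨l + 1, h⟩

/-- The highest-configuration vector `e_1 ⊗ ⋯ ⊗ e_N ∈ (ℂ^N)^{⊗N}`. -/
noncomputable def baseVec (N : ℕ) : (Fin N → Fin N) → ℂ :=
  fun x => if x = (fun j => j) then 1 else 0

/-- `Ω^i = ∑_{σ ∈ S_N} (−1)^{i·ℓ(σ)} P_σ (e_1 ⊗ ⋯ ⊗ e_N)`, where `P_σ = ρ σ` for the
(unique) multiplicative extension `ρ` of the adjacent graded permutations. -/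
noncomputable def OmegaVec (N : ℕ) (i : ℕ)
    (ρ : Equiv.Perm (Fin N) →* Matrix (Fin N → Fin N) (Fin N → Fin N) ℂ) :
    (Fin N → Fin N) → ℂ :=
  ∑ σ : Equiv.Perm (Fin N),
    (((Equiv.Perm.sign σ : ℤ) : ℂ) ^ i) • Matrix.mulVec (ρ σ) (baseVec N)

/-- The set of `(z, λ)` with pairwise distinct `z`'s and pairwise distinct `λ`'s. -/
def Usep (N : ℕ) : Set ((Fin N → ℂ) × (Fin N → ℂ)) :=
  {p | (∀ i j : Fin N, i ≠ j → p.1 i ≠ p.1 j) ∧ (∀ a b : Fin N, a ≠ b → p.2 a ≠ p.2 b)}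

end Glnm

namespace Glnm

/-- partial parity sum over slots `l < j`. -/
def psum (n N k : ℕ) (j : Fin k) (x : Fin k → Fin N) : ℕ :=
  ∑ l ∈ Finset.univ.filter (fun l : Fin k => l < j), par n N (x l)

lemma par_le_one (n N : ℕ) (a : Fin N) : par n N a ≤ 1 := by
  unfold par; split <;> simp

lemma sum_mulVec {ι α : Type*} [Fintype α] (s : Finset ι)
    (A : ι → Matrix α α ℂ) (v : α → ℂ) :
    (∑ i ∈ s, A i).mulVec v = ∑ i ∈ s, (A i).mulVec v := by
  ext y
  simp only [Matrix.mulVec, dotProduct, Finset.sum_apply, Matrix.sum_apply,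
    Finset.sum_mul]
  exact Finset.sum_comm

lemma mulVec_sumVec {ι α : Type*} [Fintype α] (s : Finset ι)
    (M : Matrix α α ℂ) (v : ι → α → ℂ) :
    M.mulVec (∑ i ∈ s, v i) = ∑ i ∈ s, M.mulVec (v i) := by
  ext y
  simp only [Matrix.mulVec, dotProduct, Finset.sum_apply, Finset.mul_sum]
  exact Finset.sum_comm

lemma psum_update {n N k : ℕ} (j u : Fin k) (x : Fin k → Fin N) (v : Fin N) :
    psum n N k j (Function.update x u v) + (if u < j then par n N (x u) else 0)
      = psum n N k j x + (if u < j then par n N v else 0) := by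
  unfold psum
  by_cases h : u < j
  · rw [if_pos h, if_pos h]
    have hu : u ∈ Finset.univ.filter (fun l : Fin k => l < j) := by simp [h]
    have h1 : ∀ l : Fin k, par n N (Function.update x u v l)
        = Function.update (fun l => par n N (x l)) u (par n N v) l := by
      intro l
      exact Function.apply_update (fun _ t => par n N t) x u v l
    simp only [h1]
    rw [Finset.sum_update_of_mem hu, Finset.sum_eq_sum_sdiff_singleton_add hu]
    ring
  · rw [if_neg h, if_neg h]
    simp only [add_zero]
    apply Finset.sum_congr rfl
    intro l hl
    have hl' : l < j := by simpa using hl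
    have : l ≠ u := fun e => h (e ▸ hl')
    rw [Function.update_of_ne this]

lemma psum_update_self {n N k : ℕ} (j : Fin k) (x : Fin k → Fin N) (v : Fin N) :
    psum n N k j (Function.update x j v) = psum n N k j x := by
  have := psum_update (n := n) (N := N) (k := k) j j x v
  simpa [lt_irrefl] using this

noncomputable def dl {N k : ℕ} (x : Fin k → Fin N) : (Fin k → Fin N) → ℂ := Pi.single x 1

lemma dl_apply {N k : ℕ} (x y : Fin k → Fin N) : dl x y = if y = x then 1 else 0 := by
  simp [dl, Pi.single_apply]

lemma eop_mulVec {n N k : ℕ} (j : Fin k) (a b : Fin N) (x : Fin k → Fin N) :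
    (eop n N k j a b).mulVec (dl x) =
      if x j = b then
        ((-1 : ℂ) ^ ((par n N a + par n N b) * psum n N k j x)) •
          dl (Function.update x j a)
      else 0 := by
  unfold dl
  rw [Matrix.mulVec_single_one]
  funext y
  change eop n N k j a b y x = _
  by_cases hxb : x j = b
  · rw [if_pos hxb]
    by_cases hy : y = Function.update x j a
    · subst hy
      have hprod : ∏ l ∈ Finset.univ.filter (fun l : Fin k => l ≠ j),
          (if Function.update x j a l = x l then (1 : ℂ) else 0) = 1 := by
        apply Finset.prod_eq_one
        intro l hl
        have hl' : l ≠ j := by simpa using hl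
        rw [Function.update_of_ne hl', if_pos rfl]
      have hsum : psum n N k j (Function.update x j a) = psum n N k j x :=
        psum_update_self j x a
      unfold eop
      rw [hprod, Function.update_self, if_pos ⟨rfl, hxb⟩]
      unfold psum at hsum ⊢
      rw [hsum]
      simp
    · rw [Pi.smul_apply, Pi.single_apply, if_neg hy, smul_zero]
      unfold eop
      by_cases hya : y j = a
      · -- there is l ≠ j with y l ≠ x l
        have hex : ∃ l, l ≠ j ∧ y l ≠ x l := by
          by_contra hcon
          push_neg at hcon
          apply hy
          funext l
          by_cases hlj : l = j
          · subst hlj; rw [Function.update_self, hya]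
          · rw [Function.update_of_ne hlj]
            exact hcon l hlj
        obtain ⟨l, hlj, hlx⟩ := hex
        have : ∏ l ∈ Finset.univ.filter (fun l : Fin k => l ≠ j),
            (if y l = x l then (1 : ℂ) else 0) = 0 := by
          apply Finset.prod_eq_zero (i := l) (by simpa using hlj)
          rw [if_neg hlx]
        rw [this, mul_zero]
      · rw [if_neg (fun h => hya h.1), zero_mul, zero_mul]
  · rw [if_neg hxb]
    unfold eop
    rw [if_neg (fun h => hxb h.2), zero_mul, zero_mul]
    rfl

lemma Egen_mulVec {n N k : ℕ} (a b : Fin N) (x : Fin k → Fin N) :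
    (Egen n N k a b).mulVec (dl x) =
      ∑ j ∈ Finset.univ.filter (fun j : Fin k => x j = b),
        ((-1 : ℂ) ^ ((par n N a + par n N b) * psum n N k j x)) •
          dl (Function.update x j a) := by
  unfold Egen
  rw [sum_mulVec]
  rw [Finset.sum_filter]
  apply Finset.sum_congr rfl
  intro j _
  rw [eop_mulVec]


lemma diag_mulVec {n N k : ℕ} (a : Fin N) (z : Fin k → ℂ) (x : Fin k → Fin N) :
    (∑ j : Fin k, z j • eop n N k j a a).mulVec (dl x) =
      (∑ j ∈ Finset.univ.filter (fun j : Fin k => x j = a), z j) • dl x := by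
  rw [sum_mulVec]
  have h1 : ∀ j : Fin k, (z j • eop n N k j a a).mulVec (dl x)
      = if x j = a then z j • dl x else 0 := by
    intro j
    rw [Matrix.smul_mulVec, eop_mulVec]
    by_cases h : x j = a
    · rw [if_pos h, if_pos h]
      have h2 : (par n N a + par n N a) * psum n N k j x
          = 2 * (par n N a * psum n N k j x) := by ring
      have h3 : Function.update x j a = x := by
        rw [← h]; exact Function.update_eq_self j x
      rw [h2, pow_mul, neg_one_sq, one_pow, h3, one_smul]
    · rw [if_neg h, if_neg h, smul_zero]
  simp only [h1]
  rw [← Finset.sum_filter, Finset.sum_smul]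

lemma XY_mulVec {n N : ℕ} (a b : Fin N) (x : Fin N → Fin N) (q r : Fin N)
    (hq : x q = a) (huq : ∀ j, x j = a → j = q)
    (hr : x r = b) (hur : ∀ j, x j = b → j = r)
    (hqr : q ≠ r) :
    (Egen n N N a b * Egen n N N b a - Egen n N N a a).mulVec (dl x) =
      (((-1 : ℂ) ^ ((par n N b + par n N a) * psum n N N q x)) *
        ((-1 : ℂ) ^ ((par n N a + par n N b) * psum n N N r (Function.update x q b)))) •
        dl (Function.update (Function.update x q b) r a) := by
  have hfa : Finset.univ.filter (fun j : Fin N => x j = a) = {q} := by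
    ext j
    simp only [Finset.mem_filter, Finset.mem_univ, true_and, Finset.mem_singleton]
    exact ⟨huq j, fun h => h ▸ hq⟩
  have hfb : Finset.univ.filter (fun j : Fin N => Function.update x q b j = b) = {q, r} := by
    ext j
    simp only [Finset.mem_filter, Finset.mem_univ, true_and, Finset.mem_insert,
      Finset.mem_singleton]
    constructor
    · intro h
      by_cases hjq : j = q
      · exact Or.inl hjq
      · right; apply hur; rw [← h, Function.update_of_ne hjq]
    · rintro (rfl | rfl)
      · rw [Function.update_self]
      · rw [Function.update_of_ne (fun h => hqr h.symm)]; exact hr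
  rw [Matrix.sub_mulVec, ← Matrix.mulVec_mulVec, Egen_mulVec b a x, hfa,
    Finset.sum_singleton, Matrix.mulVec_smul, Egen_mulVec a b _, hfb,
    Finset.sum_pair hqr, Egen_mulVec a a x, hfa, Finset.sum_singleton]
  -- simplify the `Eaa` term and the `j = q` term
  have hupd : Function.update (Function.update x q b) q a = x := by
    rw [Function.update_idem, ← hq]
    exact Function.update_eq_self q x
  have haa : (-1 : ℂ) ^ ((par n N a + par n N a) * psum n N N q x) = 1 := by
    rw [show (par n N a + par n N a) * psum n N N q x
        = 2 * (par n N a * psum n N N q x) by ring, pow_mul, neg_one_sq, one_pow]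
  have hq1 : psum n N N q (Function.update x q b) = psum n N N q x :=
    psum_update_self q x b
  rw [hupd, haa, one_smul, smul_add, smul_smul, smul_smul, hq1]
  have hcancel : (-1 : ℂ) ^ ((par n N b + par n N a) * psum n N N q x) *
      (-1 : ℂ) ^ ((par n N a + par n N b) * psum n N N q x) = 1 := by
    rw [← pow_add]
    apply Even.neg_one_pow
    exact ⟨(par n N a + par n N b) * psum n N N q x, by ring⟩
  rw [hcancel, one_smul]
  have hupd2 : Function.update x q a = x := by
    rw [← hq]; exact Function.update_eq_self q x
  rw [hupd2]
  abel


lemma neg_one_pow_congr {E1 E2 : ℕ} (h : E1 % 2 = E2 % 2) : (-1 : ℂ) ^ E1 = (-1 : ℂ) ^ E2 := by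
  rw [neg_one_pow_eq_pow_mod_two, h, ← neg_one_pow_eq_pow_mod_two]

lemma signs_eq {n N : ℕ} (a b : Fin N) (x : Fin N → Fin N) (q r : Fin N)
    (hq : x q = a) (hr : x r = b) (hqr : q ≠ r) :
    (-1 : ℂ) ^ par n N b *
        ((-1 : ℂ) ^ ((par n N b + par n N a) * psum n N N q x) *
          (-1 : ℂ) ^ ((par n N a + par n N b) * psum n N N r (Function.update x q b))) =
      (-1 : ℂ) ^ par n N a *
        ((-1 : ℂ) ^ ((par n N a + par n N b) * psum n N N r x) *
          (-1 : ℂ) ^ ((par n N b + par n N a) * psum n N N q (Function.update x r a))) := by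
  have h1 := psum_update (n := n) r q x b
  have h2 := psum_update (n := n) q r x a
  rw [hq] at h1
  rw [hr] at h2
  simp only [← pow_add]
  apply neg_one_pow_congr
  have hpa : par n N a = 0 ∨ par n N a = 1 := by unfold par; split <;> simp
  have hpb : par n N b = 0 ∨ par n N b = 1 := by unfold par; split <;> simp
  rcases lt_or_gt_of_ne hqr with hlt | hlt <;>
    [simp only [if_pos hlt, if_neg (lt_asymm hlt)] at h1 h2;
     simp only [if_pos hlt, if_neg (lt_asymm hlt)] at h1 h2] <;>
    rcases hpa with h | h <;> rcases hpb with h' | h' <;>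
      simp only [h, h'] at h1 h2 ⊢ <;> omega

lemma key_mulVec {n N : ℕ} (a b : Fin N) (hab : a ≠ b) (z : Fin N → ℂ)
    (x : Fin N → Fin N) (hx : Function.Bijective x) :
    (acomm (∑ j : Fin N, z j • eop n N N j a a)
        (((-1 : ℂ) ^ par n N b) • (Egen n N N a b * Egen n N N b a - Egen n N N a a)) -
      acomm (∑ j : Fin N, z j • eop n N N j b b)
        (((-1 : ℂ) ^ par n N a) •
          (Egen n N N b a * Egen n N N a b - Egen n N N b b))).mulVec (dl x) = 0 := by
  obtain ⟨q, hq⟩ := hx.surjective a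
  obtain ⟨r, hr⟩ := hx.surjective b
  have huq : ∀ j, x j = a → j = q := fun j h => hx.injective (h.trans hq.symm)
  have hur : ∀ j, x j = b → j = r := fun j h => hx.injective (h.trans hr.symm)
  have hqr : q ≠ r := fun h => hab (hq ▸ hr ▸ h ▸ rfl)
  set A := ∑ j : Fin N, z j • eop n N N j a a with hA
  set B := ∑ j : Fin N, z j • eop n N N j b b with hB
  set X := Egen n N N a b * Egen n N N b a - Egen n N N a a with hX
  set Y := Egen n N N b a * Egen n N N a b - Egen n N N b b with hY
  set x' := Function.update (Function.update x q b) r a with hx'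
  have hx'' : Function.update (Function.update x r a) q b = x' := by
    rw [hx']; exact (Function.update_comm hqr b a x).symm
  have hx'bij : Function.Bijective x' := by
    have : x' = x ∘ (Equiv.swap q r : Equiv.Perm (Fin N)) := by
      funext l
      rw [hx']
      by_cases hlr : l = r
      · subst hlr
        rw [Function.update_self]
        simp [Equiv.swap_apply_right, hq]
      · rw [Function.update_of_ne hlr]
        by_cases hlq : l = q
        · subst hlq
          rw [Function.update_self]
          simp [Equiv.swap_apply_left, hr]
        · rw [Function.update_of_ne hlq]
          simp [Equiv.swap_apply_of_ne_of_ne hlq hlr]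
    rw [this]
    exact hx.comp (Equiv.swap q r).bijective
  -- filters for x'
  have huq' : ∀ j, x' j = a → j = r := by
    intro j h
    by_contra hjr
    rw [hx', Function.update_of_ne hjr] at h
    by_cases hjq : j = q
    · subst hjq
      rw [Function.update_self] at h
      exact hab h.symm
    · rw [Function.update_of_ne hjq] at h
      exact hjq (huq j h)
  have hur' : ∀ j, x' j = b → j = q := by
    intro j h
    by_cases hjq : j = q
    · exact hjq
    · exfalso
      by_cases hjr : j = r
      · subst hjr
        rw [hx', Function.update_self] at h
        exact hab h
      · rw [hx', Function.update_of_ne hjr, Function.update_of_ne hjq] at h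
        exact hjr (hur j h)
  have hsing : ∀ (y : Fin N → Fin N) (c t : Fin N), y t = c → (∀ j, y j = c → j = t) →
      Finset.univ.filter (fun j : Fin N => y j = c) = {t} := by
    intro y c t h hu
    ext j
    simp only [Finset.mem_filter, Finset.mem_univ, true_and, Finset.mem_singleton]
    exact ⟨hu j, fun e => e ▸ h⟩
  have hxq' : x' q = b := by
    rw [hx', Function.update_of_ne hqr, Function.update_self]
  have hxr' : x' r = a := by rw [hx', Function.update_self]
  have hfa : Finset.univ.filter (fun j : Fin N => x j = a) = {q} := hsing x a q hq huq
  have hfb : Finset.univ.filter (fun j : Fin N => x j = b) = {r} := hsing x b r hr hur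
  have hfa' : Finset.univ.filter (fun j : Fin N => x' j = a) = {r} := hsing x' a r hxr' huq'
  have hfb' : Finset.univ.filter (fun j : Fin N => x' j = b) = {q} := hsing x' b q hxq' hur'
  have hAx : A.mulVec (dl x) = z q • dl x := by
    rw [hA, diag_mulVec, hfa, Finset.sum_singleton]
  have hBx : B.mulVec (dl x) = z r • dl x := by
    rw [hB, diag_mulVec, hfb, Finset.sum_singleton]
  have hAx' : A.mulVec (dl x') = z r • dl x' := by
    rw [hA, diag_mulVec, hfa', Finset.sum_singleton]
  have hBx' : B.mulVec (dl x') = z q • dl x' := by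
    rw [hB, diag_mulVec, hfb', Finset.sum_singleton]
  have hXv : X.mulVec (dl x) =
      (((-1 : ℂ) ^ ((par n N b + par n N a) * psum n N N q x)) *
        ((-1 : ℂ) ^ ((par n N a + par n N b) * psum n N N r (Function.update x q b)))) •
        dl x' := by
    rw [hX, hx']
    exact XY_mulVec a b x q r hq huq hr hur hqr
  have hYv : Y.mulVec (dl x) =
      (((-1 : ℂ) ^ ((par n N a + par n N b) * psum n N N r x)) *
        ((-1 : ℂ) ^ ((par n N b + par n N a) * psum n N N q (Function.update x r a)))) •
        dl x' := by
    rw [hY, ← hx'']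
    exact XY_mulVec b a x r q hr hur hq huq (Ne.symm hqr)
  have hsign := signs_eq (n := n) a b x q r hq hr hqr
  unfold acomm
  rw [Matrix.sub_mulVec, Matrix.add_mulVec, Matrix.add_mulVec]
  simp only [← Matrix.mulVec_mulVec]
  simp only [Matrix.smul_mulVec]
  rw [hAx, hBx]
  simp only [Matrix.mulVec_smul]
  rw [hXv, hYv]
  simp only [Matrix.mulVec_smul]
  rw [hAx', hBx']
  match_scalars
  linear_combination (z q + z r) * hsign


lemma eop_ne_zero_imp {n N k : ℕ} {j : Fin k} {a b : Fin N} {y w : Fin k → Fin N}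
    (h : eop n N k j a b y w ≠ 0) :
    y j = a ∧ w j = b ∧ ∀ l, l ≠ j → y l = w l := by
  unfold eop at h
  have h1 : (if y j = a ∧ w j = b then (1 : ℂ) else 0) ≠ 0 := by
    intro h0; apply h; rw [h0, zero_mul, zero_mul]
  have h2 : (∏ l ∈ Finset.univ.filter (fun l : Fin k => l ≠ j),
      (if y l = w l then (1 : ℂ) else 0)) ≠ 0 := by
    intro h0; apply h; rw [h0, mul_zero]
  rw [Finset.prod_ne_zero_iff] at h2
  by_cases hc : y j = a ∧ w j = b
  · refine ⟨hc.1, hc.2, fun l hl => ?_⟩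
    have := h2 l (by simpa using hl)
    by_contra hne
    rw [if_neg hne] at this
    exact this rfl
  · rw [if_neg hc] at h1; exact absurd rfl h1

lemma Pg_swap {n N k : ℕ} {i j : Fin k} (hij : i ≠ j) {y x : Fin k → Fin N}
    (h : Pg n N k i j y x ≠ 0) : x = y ∘ Equiv.swap i j := by
  unfold Pg at h
  simp only [Matrix.sum_apply, Matrix.smul_apply, Matrix.mul_apply, smul_eq_mul] at h
  obtain ⟨a, -, ha⟩ := Finset.exists_ne_zero_of_sum_ne_zero h
  obtain ⟨b, -, hb⟩ := Finset.exists_ne_zero_of_sum_ne_zero ha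
  have hb' : (∑ w : Fin k → Fin N, eop n N k i a b y w * eop n N k j b a w x) ≠ 0 := by
    intro h0; apply hb; rw [h0, mul_zero]
  obtain ⟨w, -, hw⟩ := Finset.exists_ne_zero_of_sum_ne_zero hb'
  have hw1 : eop n N k i a b y w ≠ 0 := fun h0 => hw (by rw [h0, zero_mul])
  have hw2 : eop n N k j b a w x ≠ 0 := fun h0 => hw (by rw [h0, mul_zero])
  obtain ⟨hyi, hwi, hyw⟩ := eop_ne_zero_imp hw1
  obtain ⟨hwj, hxj, hwx⟩ := eop_ne_zero_imp hw2
  funext l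
  by_cases hli : l = i
  · rw [hli, Function.comp_apply, Equiv.swap_apply_left]
    have e1 : w i = x i := hwx i hij
    have e2 : y j = w j := hyw j (Ne.symm hij)
    rw [← e1, hwi, e2, hwj]
  · by_cases hlj : l = j
    · rw [hlj, Function.comp_apply, Equiv.swap_apply_right, hxj, hyi]
    · rw [Function.comp_apply, Equiv.swap_apply_of_ne_of_ne hli hlj]
      exact ((hyw l hli).trans (hwx l hlj)).symm

/-- The submonoid of matrices carrying bijective-support vectors to
bijective-support vectors. -/
def GoodM (N k : ℕ) : Submonoid (Matrix (Fin k → Fin N) (Fin k → Fin N) ℂ) where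
  carrier := {T | ∀ y x, T y x ≠ 0 → Function.Bijective x → Function.Bijective y}
  one_mem' := by
    intro y x h hx
    have hyx : y = x := by
      by_contra hne
      exact h (Matrix.one_apply_ne hne)
    rwa [hyx]
  mul_mem' := by
    intro T U hT hU y x h hx
    rw [Matrix.mul_apply] at h
    obtain ⟨w, -, hw⟩ := Finset.exists_ne_zero_of_sum_ne_zero h
    have h1 : T y w ≠ 0 := fun h0 => hw (by rw [h0, zero_mul])
    have h2 : U w x ≠ 0 := fun h0 => hw (by rw [h0, mul_zero])
    exact hT y w h1 (hU w x h2 hx)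

lemma Pg_mem_GoodM {n N k : ℕ} {i j : Fin k} (hij : i ≠ j) :
    Pg n N k i j ∈ GoodM N k := by
  intro y x h hx
  have hxy := Pg_swap hij h
  have hyx : y = x ∘ Equiv.swap i j := by
    funext l
    rw [Function.comp_apply]
    have := congrFun hxy (Equiv.swap i j l)
    rw [Function.comp_apply, Equiv.swap_apply_self] at this
    exact this.symm
  rw [hyx]
  exact hx.comp (Equiv.swap i j).bijective

lemma rho_mem_GoodM {n N : ℕ}
    (ρ : Equiv.Perm (Fin N) →* Matrix (Fin N → Fin N) (Fin N → Fin N) ℂ)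
    (hρ : ∀ (l : ℕ) (h : l + 1 < N),
      ρ (Equiv.swap ⟨l, Nat.lt_of_succ_lt h⟩ ⟨l + 1, h⟩) =
        Pg n N N ⟨l, Nat.lt_of_succ_lt h⟩ ⟨l + 1, h⟩)
    (σ : Equiv.Perm (Fin N)) : ρ σ ∈ GoodM N N := by
  cases N with
  | zero =>
      intro y x h hx
      exact ⟨fun u => u.elim0, fun u => u.elim0⟩
  | succ N' =>
      have hgen : Submonoid.closure
          (Set.range fun i : Fin N' => Equiv.swap i.castSucc i.succ)
            ≤ Submonoid.comap (ρ : Equiv.Perm (Fin (N' + 1)) →* _)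
              (GoodM (N' + 1) (N' + 1)) := by
        rw [Submonoid.closure_le]
        rintro _ ⟨i, rfl⟩
        have hlt : (i : ℕ) + 1 < N' + 1 := by omega
        have hc : i.castSucc = (⟨(i : ℕ), Nat.lt_of_succ_lt hlt⟩ : Fin (N' + 1)) := by
          apply Fin.ext; rfl
        have hs : i.succ = (⟨(i : ℕ) + 1, hlt⟩ : Fin (N' + 1)) := by
          apply Fin.ext; rfl
        have hne : (⟨(i : ℕ), Nat.lt_of_succ_lt hlt⟩ : Fin (N' + 1)) ≠ ⟨(i : ℕ) + 1, hlt⟩ := by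
          intro h0
          rw [Fin.mk.injEq] at h0
          omega
        show ρ (Equiv.swap i.castSucc i.succ) ∈ GoodM (N' + 1) (N' + 1)
        rw [hc, hs, hρ (i : ℕ) hlt]
        exact Pg_mem_GoodM hne
      have hσ : σ ∈ Submonoid.closure
          (Set.range fun i : Fin N' => Equiv.swap i.castSucc i.succ) := by
        rw [Equiv.Perm.mclosure_swap_castSucc_succ]
        trivial
      exact hgen hσ

lemma rho_support {n N : ℕ}
    (ρ : Equiv.Perm (Fin N) →* Matrix (Fin N → Fin N) (Fin N → Fin N) ℂ)
    (hρ : ∀ (l : ℕ) (h : l + 1 < N),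
      ρ (Equiv.swap ⟨l, Nat.lt_of_succ_lt h⟩ ⟨l + 1, h⟩) =
        Pg n N N ⟨l, Nat.lt_of_succ_lt h⟩ ⟨l + 1, h⟩)
    (σ : Equiv.Perm (Fin N)) (y : Fin N → Fin N) (hy : ¬ Function.Bijective y) :
    Matrix.mulVec (ρ σ) (baseVec N) y = 0 := by
  have hbase : baseVec N = Pi.single (fun j : Fin N => j) (1 : ℂ) := by
    funext x
    rw [Pi.single_apply]
    rfl
  rw [hbase, Matrix.mulVec_single_one]
  change ρ σ y (fun j : Fin N => j) = 0
  by_contra h0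
  exact hy (rho_mem_GoodM ρ hρ σ y _ h0 Function.bijective_id)


lemma eop_transpose {n N k : ℕ} (j : Fin k) (a b : Fin N) :
    (eop n N k j a b).transpose = eop n N k j b a := by
  ext x y
  rw [Matrix.transpose_apply]
  unfold eop
  by_cases hall : ∀ l : Fin k, l ≠ j → y l = x l
  · have hsum : (∑ l ∈ Finset.univ.filter (fun l : Fin k => l < j), par n N (y l))
        = ∑ l ∈ Finset.univ.filter (fun l : Fin k => l < j), par n N (x l) := by
      apply Finset.sum_congr rfl
      intro l hl
      have hl' : l < j := by simpa using hl
      rw [hall l (ne_of_lt hl')]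
    have hp1 : (∏ l ∈ Finset.univ.filter (fun l : Fin k => l ≠ j),
        (if y l = x l then (1 : ℂ) else 0)) = 1 := by
      apply Finset.prod_eq_one
      intro l hl
      exact if_pos (hall l (by simpa using hl))
    have hp2 : (∏ l ∈ Finset.univ.filter (fun l : Fin k => l ≠ j),
        (if x l = y l then (1 : ℂ) else 0)) = 1 := by
      apply Finset.prod_eq_one
      intro l hl
      exact if_pos (hall l (by simpa using hl)).symm
    rw [hp1, hp2, hsum, Nat.add_comm (par n N a) (par n N b)]
    simp only [mul_one]
    congr 1
    exact if_congr and_comm rfl rfl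
  · push_neg at hall
    obtain ⟨l, hlj, hne⟩ := hall
    have hp1 : (∏ l ∈ Finset.univ.filter (fun l : Fin k => l ≠ j),
        (if y l = x l then (1 : ℂ) else 0)) = 0 :=
      Finset.prod_eq_zero (by simpa using hlj) (if_neg hne)
    have hp2 : (∏ l ∈ Finset.univ.filter (fun l : Fin k => l ≠ j),
        (if x l = y l then (1 : ℂ) else 0)) = 0 :=
      Finset.prod_eq_zero (by simpa using hlj) (if_neg (fun e => hne e.symm))
    rw [hp1, hp2, mul_zero, mul_zero]

lemma Egen_transpose {n N k : ℕ} (a b : Fin N) :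
    (Egen n N k a b).transpose = Egen n N k b a := by
  unfold Egen
  rw [Matrix.transpose_sum]
  simp only [eop_transpose]

end Glnm

open Glnm in
/-- `Ω^i` annihilates the difference of anticommutators. -/
theorem omega_kills_anticommutator_difference (n m : ℕ) (i : ℕ) (hi : i = 0 ∨ i = 1)
    (ρ : Equiv.Perm (Fin (n + m)) →*
      Matrix (Fin (n + m) → Fin (n + m)) (Fin (n + m) → Fin (n + m)) ℂ)
    (hρ : ∀ (l : ℕ) (h : l + 1 < n + m),
      ρ (Equiv.swap ⟨l, Nat.lt_of_succ_lt h⟩ ⟨l + 1, h⟩) =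
        Pg n (n + m) (n + m) ⟨l, Nat.lt_of_succ_lt h⟩ ⟨l + 1, h⟩)
    (a b : Fin (n + m)) (hab : a ≠ b)
    (z : Fin (n + m) → ℂ) (v : (Fin (n + m) → Fin (n + m)) → ℂ) :
    dotProduct (OmegaVec (n + m) i ρ)
      (Matrix.mulVec
        (acomm (∑ j : Fin (n + m), z j • eop n (n + m) (n + m) j a a)
            (((-1 : ℂ) ^ par n (n + m) b) •
              (Egen n (n + m) (n + m) a b * Egen n (n + m) (n + m) b a -
                Egen n (n + m) (n + m) a a)) -
          acomm (∑ j : Fin (n + m), z j • eop n (n + m) (n + m) j b b)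
            (((-1 : ℂ) ^ par n (n + m) a) •
              (Egen n (n + m) (n + m) b a * Egen n (n + m) (n + m) a b -
                Egen n (n + m) (n + m) b b))) v) = 0 := by
  classical
  set M := (acomm (∑ j : Fin (n + m), z j • eop n (n + m) (n + m) j a a)
      (((-1 : ℂ) ^ par n (n + m) b) •
        (Egen n (n + m) (n + m) a b * Egen n (n + m) (n + m) b a -
          Egen n (n + m) (n + m) a a)) -
    acomm (∑ j : Fin (n + m), z j • eop n (n + m) (n + m) j b b)
      (((-1 : ℂ) ^ par n (n + m) a) •
        (Egen n (n + m) (n + m) b a * Egen n (n + m) (n + m) a b -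
          Egen n (n + m) (n + m) b b))) with hM
  have hMT : M.transpose = M := by
    rw [hM]
    unfold acomm
    simp only [Matrix.transpose_sub, Matrix.transpose_add, Matrix.transpose_mul,
      Matrix.transpose_smul, Matrix.transpose_sum, eop_transpose, Egen_transpose]
    abel
  rw [Matrix.dotProduct_mulVec]
  have hrw : Matrix.vecMul (OmegaVec (n + m) i ρ) M
      = M.mulVec (OmegaVec (n + m) i ρ) := by
    conv_lhs => rw [← hMT]
    rw [Matrix.vecMul_transpose]
  rw [hrw]
  suffices hz : M.mulVec (OmegaVec (n + m) i ρ) = 0 by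
    rw [hz, zero_dotProduct]
  unfold OmegaVec
  rw [mulVec_sumVec]
  apply Finset.sum_eq_zero
  intro σ _
  rw [Matrix.mulVec_smul]
  suffices h : M.mulVec (Matrix.mulVec (ρ σ) (baseVec (n + m))) = 0 by
    rw [h, smul_zero]
  set w := Matrix.mulVec (ρ σ) (baseVec (n + m)) with hw
  have hwdec : w = ∑ x : Fin (n + m) → Fin (n + m), w x • dl x := by
    have hsingle : ∀ x : Fin (n + m) → Fin (n + m), Pi.single x (w x) = w x • dl x := by
      intro x
      funext y
      rw [Pi.smul_apply, dl_apply, Pi.single_apply]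
      split <;> simp
    conv_lhs => rw [← Finset.univ_sum_single w]
    simp only [hsingle]
  rw [hwdec, mulVec_sumVec]
  apply Finset.sum_eq_zero
  intro x _
  rw [Matrix.mulVec_smul]
  by_cases hx : Function.Bijective x
  · have hk := key_mulVec (n := n) (N := n + m) a b hab z x hx
    rw [hM, hk, smul_zero]
  · have h0 : w x = 0 := rho_support ρ hρ σ x hx
    rw [h0, zero_smul]
end

section
/- (Matsuo–Cherednik map, KZ side.) Let κ ∈ ℂ, κ ≠ 0, and let U := {(z,λ) ∈ ℂ^N × ℂ^N : the z_j are pairwise distinct and the λ_a are pairwise distinct}. Suppose Ψ : U → V is differentiable and satisfies the twisted KZ equations κ ∂Ψ/∂z_j = B_j Ψ (j = 1,…,N), the dynamical equations κ ∂Ψ/∂λ_a = A_a Ψ (a = 1,…,N), and the weight condition E_{aa} Ψ = Ψ for all a. Then for i ∈ {0,1} the scalar function φ_i := Ω^i ⬝ Ψ satisfies on U the Calogero-type eigenvalue equation κ² ∑_{a=1}^N ∂²φ_i/∂z_a² + ∑_{a≠b} ((−1)^i κ − 1)/(z_a − z_b)² · φ_i = (∑_{a=1}^N λ_a²) φ_i.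 -/
open Finset

namespace Glnm

lemma npc {a b : ℕ} (h : a % 2 = b % 2) : ((-1:ℂ))^a = (-1)^b := by
  rcases Nat.even_or_odd a with ha | ha
  · have hb : Even b := by rw [Nat.even_iff] at *; omega
    rw [ha.neg_one_pow, hb.neg_one_pow]
  · have hb : Odd b := by rw [Nat.odd_iff] at *; omega
    rw [ha.neg_one_pow, hb.neg_one_pow]

lemma par_cases (n N : ℕ) (a : Fin N) : par n N a = 0 ∨ par n N a = 1 := by
  unfold par; split <;> simp

/-- explicit form of eop -/
lemma eop_apply' (n N k : ℕ) (j : Fin k) (a b : Fin N) (x y : Fin k → Fin N) :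
    eop n N k j a b x y =
      if x j = a ∧ y = Function.update x j b then
        ((-1:ℂ)) ^ ((par n N a + par n N b) *
          ∑ l ∈ Finset.univ.filter (fun l : Fin k => l < j), par n N (x l))
      else 0 := by
  unfold eop
  by_cases h1 : x j = a ∧ y = Function.update x j b
  · rw [if_pos h1]
    have hy : y j = b := by rw [h1.2]; simp
    rw [if_pos ⟨h1.1, hy⟩]
    have : ∀ l ∈ Finset.univ.filter (fun l : Fin k => l ≠ j),
        (if x l = y l then (1:ℂ) else 0) = 1 := by
      intro l hl
      simp only [Finset.mem_filter] at hl
      rw [h1.2, Function.update_of_ne hl.2, if_pos rfl]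
    rw [Finset.prod_congr rfl this]
    simp
  · rw [if_neg h1]
    by_cases h2 : x j = a ∧ y j = b
    · -- then some l ≠ j with x l ≠ y l
      have : ∃ l, l ≠ j ∧ x l ≠ y l := by
        by_contra hc
        push_neg at hc
        apply h1
        refine ⟨h2.1, ?_⟩
        funext l
        by_cases hl : l = j
        · subst hl; rw [h2.2]; simp
        · rw [Function.update_of_ne hl]
          exact (hc l hl).symm
      obtain ⟨l, hlj, hlxy⟩ := this
      rw [Finset.prod_eq_zero (i := l) (by simp [hlj]) (by rw [if_neg hlxy])]
      ring
    · rw [if_neg h2]; ring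

lemma comp_swap_eq (i j : Fin k) (hij : i ≠ j) (x : Fin k → Fin N) :
    x ∘ (Equiv.swap i j) = Function.update (Function.update x i (x j)) j (x i) := by
  funext l
  by_cases hl : l = j
  · subst hl; simp [Equiv.swap_apply_right]
  · by_cases hl2 : l = i
    · subst hl2
      simp [Equiv.swap_apply_left, Function.update_of_ne hij,
        Function.update_of_ne hl]
    · simp [Function.update_of_ne hl, Function.update_of_ne hl2,
        Equiv.swap_apply_of_ne_of_ne hl2 hl]

end Glnm

namespace Glnm

/-- indices strictly between i and j -/
def betw (k : ℕ) (i j : Fin k) : Finset (Fin k) :=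
  Finset.univ.filter (fun l => (i < l ∧ l < j) ∨ (j < l ∧ l < i))

/-- the sign of the graded permutation -/
noncomputable def pgSign (n N k : ℕ) (i j : Fin k) (x : Fin k → Fin N) : ℂ :=
  (-1:ℂ) ^ (par n N (x i) * par n N (x j) +
    (par n N (x i) + par n N (x j)) * ∑ l ∈ betw k i j, par n N (x l))

lemma pgSign_comm (n N k : ℕ) (i j : Fin k) (x : Fin k → Fin N) :
    pgSign n N k i j x = pgSign n N k j i x := by
  unfold pgSign betw
  congr 2
  · ring
  · have hset : Finset.univ.filter (fun l : Fin k => j < l ∧ l < i ∨ i < l ∧ l < j)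
        = Finset.univ.filter (fun l : Fin k => i < l ∧ l < j ∨ j < l ∧ l < i) := by
      ext l; simp [or_comm]
    rw [hset]; ring

lemma pg_apply (n N k : ℕ) (i j : Fin k) (hij : i ≠ j) (x y : Fin k → Fin N) :
    Pg n N k i j x y =
      if y = x ∘ (Equiv.swap i j) then pgSign n N k i j x else 0 := by
  classical
  unfold Pg
  simp only [Matrix.sum_apply, Matrix.smul_apply, Matrix.mul_apply, smul_eq_mul]
  simp only [eop_apply']
  rw [Finset.sum_eq_single (x i)]
  rotate_left
  · intro a _ ha
    apply Finset.sum_eq_zero; intro b _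
    rw [Finset.sum_eq_zero, mul_zero]
    intro u _
    have hne : ¬ (x i = a ∧ u = Function.update x i b) := fun h => ha h.1.symm
    rw [if_neg hne, zero_mul]
  · simp
  rw [Finset.sum_eq_single (x j)]
  rotate_left
  · intro b _ hb
    rw [Finset.sum_eq_zero, mul_zero]
    intro u _
    by_cases h1 : x i = x i ∧ u = Function.update x i b
    · have hne : ¬ (u j = b ∧ y = Function.update u j (x i)) := by
        intro h2
        apply hb
        rw [h1.2] at h2
        rw [← h2.1, Function.update_of_ne (Ne.symm hij)]
      rw [if_neg hne, mul_zero]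
    · rw [if_neg h1, zero_mul]
  · simp
  set u₀ : Fin k → Fin N := Function.update x i (x j) with hu₀
  rw [Finset.sum_eq_single u₀]
  rotate_left
  · intro u _ hu
    have hne : ¬ (x i = x i ∧ u = u₀) := fun h => hu h.2
    rw [if_neg hne, zero_mul]
  · simp
  rw [if_pos ⟨rfl, rfl⟩]
  have hu₀j : u₀ j = x j := Function.update_of_ne (Ne.symm hij) _ _
  have hyc : (y = Function.update u₀ j (x i)) ↔ (y = x ∘ (Equiv.swap i j)) := by
    rw [comp_swap_eq i j hij x]
  by_cases hy : y = x ∘ (Equiv.swap i j)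
  · rw [if_pos ⟨hu₀j, hyc.mpr hy⟩, if_pos hy]
    unfold pgSign
    set A := ∑ l ∈ Finset.univ.filter (fun l : Fin k => l < i), par n N (x l) with hA
    set C := ∑ l ∈ betw k i j, par n N (x l) with hC
    set B := ∑ l ∈ Finset.univ.filter (fun l : Fin k => l < j), par n N (u₀ l) with hB
    have hkey : (B + par n N (x j) + A + C) % 2 = 0 := by
      rcases lt_or_gt_of_ne hij with hlt | hgt
      · have hset : Finset.univ.filter (fun l : Fin k => l < j)
            = insert i ((Finset.univ.filter (fun l : Fin k => l < i)) ∪ betw k i j) := by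
          ext l
          simp only [Finset.mem_filter, Finset.mem_univ, true_and, Finset.mem_insert,
            Finset.mem_union, betw, Fin.lt_def, Fin.ext_iff]
          have := hlt
          rw [Fin.lt_def] at this
          omega
        have hnotmem : i ∉ (Finset.univ.filter (fun l : Fin k => l < i)) ∪ betw k i j := by
          simp only [Finset.mem_union, Finset.mem_filter, Finset.mem_univ, true_and,
            betw, Fin.lt_def]
          omega
        have hdisj : Disjoint (Finset.univ.filter (fun l : Fin k => l < i)) (betw k i j) := by
          rw [Finset.disjoint_left]
          intro l hl hl2
          simp only [Finset.mem_filter, Finset.mem_univ, true_and, betw, Fin.lt_def] at hl hl2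
          omega
        have h1 : par n N (u₀ i) = par n N (x j) := by rw [hu₀, Function.update_self]
        have h2 : ∀ l ∈ Finset.univ.filter (fun l : Fin k => l < i),
            par n N (u₀ l) = par n N (x l) := by
          intro l hl
          simp only [Finset.mem_filter, Finset.mem_univ, true_and] at hl
          rw [hu₀, Function.update_of_ne (ne_of_lt hl)]
        have h3 : ∀ l ∈ betw k i j, par n N (u₀ l) = par n N (x l) := by
          intro l hl
          simp only [betw, Finset.mem_filter, Finset.mem_univ, true_and, Fin.lt_def] at hl
          have hlne : l ≠ i := by
            simp only [ne_eq, Fin.ext_iff]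
            rw [Fin.lt_def] at hlt
            omega
          rw [hu₀, Function.update_of_ne hlne]
        have : B = par n N (x j) + (A + C) := by
          rw [hB, hset, Finset.sum_insert hnotmem, Finset.sum_union hdisj, h1,
            Finset.sum_congr rfl h2, Finset.sum_congr rfl h3, hA, hC]
        omega
      · have h2 : ∀ l ∈ Finset.univ.filter (fun l : Fin k => l < j),
            par n N (u₀ l) = par n N (x l) := by
          intro l hl
          simp only [Finset.mem_filter, Finset.mem_univ, true_and] at hl
          rw [hu₀, Function.update_of_ne (ne_of_lt (lt_trans hl hgt))]
        have hset : Finset.univ.filter (fun l : Fin k => l < i)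
            = insert j ((Finset.univ.filter (fun l : Fin k => l < j)) ∪ betw k i j) := by
          ext l
          simp only [Finset.mem_filter, Finset.mem_univ, true_and, Finset.mem_insert,
            Finset.mem_union, betw, Fin.lt_def, Fin.ext_iff]
          have := hgt
          rw [Fin.lt_def] at this
          omega
        have hnotmem : j ∉ (Finset.univ.filter (fun l : Fin k => l < j)) ∪ betw k i j := by
          simp only [Finset.mem_union, Finset.mem_filter, Finset.mem_univ, true_and,
            betw, Fin.lt_def]
          omega
        have hdisj : Disjoint (Finset.univ.filter (fun l : Fin k => l < j)) (betw k i j) := by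
          rw [Finset.disjoint_left]
          intro l hl hl2
          simp only [Finset.mem_filter, Finset.mem_univ, true_and, betw, Fin.lt_def] at hl hl2
          omega
        have hB2 : B = ∑ l ∈ Finset.univ.filter (fun l : Fin k => l < j), par n N (x l) := by
          rw [hB]; exact Finset.sum_congr rfl h2
        have : A = par n N (x j) + (B + C) := by
          rw [hA, hset, Finset.sum_insert hnotmem, Finset.sum_union hdisj, hB2, hC]
        omega
    rw [← mul_assoc, ← pow_add, ← pow_add]
    apply npc
    clear_value A C B
    clear hA hC hB
    rcases par_cases n N (x i) with h | h <;> rcases par_cases n N (x j) with h' | h' <;>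
      simp only [h, h'] at hkey ⊢ <;> ring_nf <;> ring_nf at hkey <;> omega
  · have hne : ¬ (u₀ j = x j ∧ y = Function.update u₀ j (x i)) :=
      fun h => hy (hyc.mp h.2)
    rw [if_neg hne, if_neg hy]
    simp

end Glnm

namespace Glnm

lemma pgSign_swap (n N k : ℕ) (i j : Fin k) (hij : i ≠ j) (x : Fin k → Fin N) :
    pgSign n N k i j (x ∘ (Equiv.swap i j)) = pgSign n N k i j x := by
  unfold pgSign
  have h1 : (x ∘ (Equiv.swap i j)) i = x j := by simp [Equiv.swap_apply_left]
  have h2 : (x ∘ (Equiv.swap i j)) j = x i := by simp [Equiv.swap_apply_right]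
  have h3 : ∀ l ∈ betw k i j, (x ∘ (Equiv.swap i j)) l = x l := by
    intro l hl
    simp only [betw, Finset.mem_filter, Finset.mem_univ, true_and, Fin.lt_def] at hl
    have hli : l ≠ i := by simp only [ne_eq, Fin.ext_iff]; omega
    have hlj : l ≠ j := by simp only [ne_eq, Fin.ext_iff]; omega
    simp [Equiv.swap_apply_of_ne_of_ne hli hlj]
  rw [h1, h2]
  have : ∑ l ∈ betw k i j, par n N ((x ∘ (Equiv.swap i j)) l) = ∑ l ∈ betw k i j, par n N (x l) :=
    Finset.sum_congr rfl (fun l hl => by rw [h3 l hl])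
  rw [this]
  ring_nf

lemma pg_symm_entry (n N k : ℕ) (i j : Fin k) (hij : i ≠ j) (x y : Fin k → Fin N) :
    Pg n N k i j x y = Pg n N k i j y x := by
  rw [pg_apply n N k i j hij, pg_apply n N k i j hij]
  by_cases h : y = x ∘ (Equiv.swap i j)
  · have h' : x = y ∘ (Equiv.swap i j) := by
      rw [h]; funext l; simp
    rw [if_pos h, if_pos h', h, pgSign_swap n N k i j hij]
  · have h' : ¬ x = y ∘ (Equiv.swap i j) := by
      intro h2; apply h; rw [h2]; funext l; simp
    rw [if_neg h, if_neg h']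

lemma pg_idx_comm (n N k : ℕ) (i j : Fin k) (hij : i ≠ j) :
    Pg n N k i j = Pg n N k j i := by
  ext x y
  rw [pg_apply n N k i j hij, pg_apply n N k j i (Ne.symm hij), Equiv.swap_comm,
    pgSign_comm]

lemma mul_permlike {k N : ℕ} (σ₁ σ₂ : Equiv.Perm (Fin k)) (f g : (Fin k → Fin N) → ℂ)
    (M₁ M₂ : Matrix (Fin k → Fin N) (Fin k → Fin N) ℂ)
    (h₁ : ∀ x y, M₁ x y = if y = x ∘ σ₁ then f x else 0)
    (h₂ : ∀ x y, M₂ x y = if y = x ∘ σ₂ then g x else 0) (x y : Fin k → Fin N) :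
    (M₁ * M₂) x y = if y = x ∘ (σ₁ * σ₂ : Equiv.Perm (Fin k)) then f x * g (x ∘ σ₁) else 0 := by
  rw [Matrix.mul_apply]
  rw [Finset.sum_eq_single (x ∘ σ₁)]
  · rw [h₁, if_pos rfl, h₂]
    by_cases h : y = x ∘ (σ₁ * σ₂ : Equiv.Perm (Fin k))
    · rw [if_pos, if_pos h]
      rw [h]; rfl
    · rw [if_neg, if_neg h, mul_zero]
      intro hc; apply h; rw [hc]; rfl
  · intro u _ hu
    rw [h₁, if_neg (fun h => hu h), zero_mul]
  · simp

lemma pg_sq (n N k : ℕ) (i j : Fin k) (hij : i ≠ j) :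
    Pg n N k i j * Pg n N k i j = 1 := by
  ext x y
  rw [mul_permlike (Equiv.swap i j) (Equiv.swap i j) (pgSign n N k i j) (pgSign n N k i j)
    _ _ (pg_apply n N k i j hij) (pg_apply n N k i j hij)]
  rw [Equiv.swap_mul_self]
  rw [Equiv.Perm.coe_one, Function.comp_id]
  rw [pgSign_swap n N k i j hij]
  unfold pgSign
  rw [← pow_add]
  by_cases h : y = x
  · rw [if_pos h, h, Matrix.one_apply_eq]
    apply npc (b := 0)
    rcases par_cases n N (x i) with h1 | h1 <;> rcases par_cases n N (x j) with h2 | h2 <;>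
      rw [h1, h2] <;> ring_nf <;> omega
  · rw [if_neg h, Matrix.one_apply_ne (fun hc : x = y => h hc.symm)]

end Glnm

namespace Glnm

lemma betw_adj (k : ℕ) (i : Fin k) (h : (i:ℕ)+1 < k) : betw k i ⟨(i:ℕ)+1, h⟩ = ∅ := by
  ext l
  simp only [betw, Finset.mem_filter, Finset.mem_univ, true_and, Fin.lt_def,
    Finset.notMem_empty, iff_false]
  omega

lemma pg_braid (n N k : ℕ) (a i : Fin k) (h : (i:ℕ)+1 < k) (hai : (a:ℕ) < (i:ℕ)) :
    Pg n N k i ⟨(i:ℕ)+1, h⟩ * (Pg n N k a i * Pg n N k i ⟨(i:ℕ)+1, h⟩) =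
      Pg n N k a ⟨(i:ℕ)+1, h⟩ := by
  set j : Fin k := ⟨(i:ℕ)+1, h⟩ with hj
  have hij : i ≠ j := by simp only [ne_eq, Fin.ext_iff, hj]; omega
  have hani : a ≠ i := by simp only [ne_eq, Fin.ext_iff]; omega
  have hanj : a ≠ j := by simp only [ne_eq, Fin.ext_iff, hj]; omega
  have e1 : ∀ x y, (Pg n N k a i * Pg n N k i j) x y =
      if y = x ∘ (Equiv.swap a i * Equiv.swap i j : Equiv.Perm (Fin k)) then
        pgSign n N k a i x * pgSign n N k i j (x ∘ Equiv.swap a i) else 0 :=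
    mul_permlike _ _ _ _ _ _ (pg_apply n N k a i hani) (pg_apply n N k i j hij)
  have e2 : ∀ x y, (Pg n N k i j * (Pg n N k a i * Pg n N k i j)) x y =
      if y = x ∘ (Equiv.swap i j * (Equiv.swap a i * Equiv.swap i j) : Equiv.Perm (Fin k)) then
        pgSign n N k i j x *
          (pgSign n N k a i (x ∘ Equiv.swap i j) *
            pgSign n N k i j ((x ∘ Equiv.swap i j) ∘ Equiv.swap a i)) else 0 :=
    mul_permlike _ _ _ _ _ _ (pg_apply n N k i j hij) e1
  have hperm : (Equiv.swap i j * (Equiv.swap a i * Equiv.swap i j) : Equiv.Perm (Fin k))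
      = Equiv.swap a j := by
    rw [← mul_assoc, Equiv.swap_mul_swap_mul_swap hani hanj, Equiv.swap_comm]
  ext x y
  rw [e2 x y, pg_apply n N k a j hanj, hperm]
  by_cases hy : y = x ∘ (Equiv.swap a j)
  · rw [if_pos hy, if_pos hy]
    -- sign computation
    have hx1a : (x ∘ Equiv.swap i j) a = x a := by
      simp [Equiv.swap_apply_of_ne_of_ne hani hanj]
    have hx1i : (x ∘ Equiv.swap i j) i = x j := by simp [Equiv.swap_apply_left]
    have hx2i : ((x ∘ Equiv.swap i j) ∘ Equiv.swap a i) i = x a := by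
      simp only [Function.comp_apply, Equiv.swap_apply_right]
      exact hx1a
    have hx2j : ((x ∘ Equiv.swap i j) ∘ Equiv.swap a i) j = x i := by
      have hja : j ≠ a := Ne.symm hanj
      have hji : j ≠ i := Ne.symm hij
      simp only [Function.comp_apply, Equiv.swap_apply_of_ne_of_ne hja hji,
        Equiv.swap_apply_right]
    have hsum1 : ∑ l ∈ betw k a i, par n N ((x ∘ Equiv.swap i j) l)
        = ∑ l ∈ betw k a i, par n N (x l) := by
      apply Finset.sum_congr rfl
      intro l hl
      simp only [betw, Finset.mem_filter, Finset.mem_univ, true_and, Fin.lt_def] at hl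
      have h1 : l ≠ i := by simp only [ne_eq, Fin.ext_iff]; omega
      have h2 : l ≠ j := by simp only [ne_eq, Fin.ext_iff, hj]; omega
      simp [Equiv.swap_apply_of_ne_of_ne h1 h2]
    have hsum2 : betw k a j = insert i (betw k a i) := by
      ext l
      simp only [betw, Finset.mem_filter, Finset.mem_univ, true_and, Finset.mem_insert,
        Fin.lt_def, Fin.ext_iff, hj]
      omega
    have hnotmem : i ∉ betw k a i := by
      simp only [betw, Finset.mem_filter, Finset.mem_univ, true_and, Fin.lt_def]
      omega
    unfold pgSign
    rw [hx1a, hx1i, hx2i, hx2j, hsum1, betw_adj k i h, hsum2, Finset.sum_insert hnotmem]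
    simp only [Finset.sum_empty, mul_zero, add_zero]
    rw [← pow_add, ← pow_add]
    apply npc
    set M := ∑ l ∈ betw k a i, par n N (x l) with hM
    clear_value M
    rcases par_cases n N (x a) with h1 | h1 <;> rcases par_cases n N (x i) with h2 | h2 <;>
      rcases par_cases n N (x j) with h3 | h3 <;> rw [h1, h2, h3] <;> ring_nf <;> omega
  · rw [if_neg hy, if_neg hy]

end Glnm

namespace Glnm

variable {n N : ℕ}
  (ρ : Equiv.Perm (Fin N) →* Matrix (Fin N → Fin N) (Fin N → Fin N) ℂ)
  (hρ : ∀ (l : ℕ) (h : l + 1 < N),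
    ρ (Equiv.swap ⟨l, Nat.lt_of_succ_lt h⟩ ⟨l + 1, h⟩) =
      Pg n N N ⟨l, Nat.lt_of_succ_lt h⟩ ⟨l + 1, h⟩)

include hρ

lemma pg_eq_rho (a b : Fin N) (hab : a ≠ b) : ρ (Equiv.swap a b) = Pg n N N a b := by
  have key : ∀ d : ℕ, ∀ a b : Fin N, (b:ℕ) = (a:ℕ) + d + 1 →
      ρ (Equiv.swap a b) = Pg n N N a b := by
    intro d
    induction d with
    | zero =>
      intro a b hb
      have h : (a:ℕ) + 1 < N := by have := b.isLt; omega
      have ha : a = ⟨(a:ℕ), Nat.lt_of_succ_lt h⟩ := by simp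
      have hbb : b = ⟨(a:ℕ) + 1, h⟩ := by rw [Fin.ext_iff]; exact hb
      rw [ha, hbb]
      exact hρ (a:ℕ) h
    | succ d ih =>
      intro a b hb
      have hbpos : (b:ℕ) = ((a:ℕ) + d + 1) + 1 := by omega
      set c : Fin N := ⟨(a:ℕ) + d + 1, by have := b.isLt; omega⟩ with hc
      have hcb : (c:ℕ) + 1 < N := by have := b.isLt; simp [hc]; omega
      have hbc : b = ⟨(c:ℕ) + 1, hcb⟩ := by rw [Fin.ext_iff]; simp [hc]; omega
      have hac : c ≠ a := by simp only [ne_eq, Fin.ext_iff, hc]; omega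
      have hab' : b ≠ a := by simp only [ne_eq, Fin.ext_iff]; omega
      have hswap : Equiv.swap a b =
          Equiv.swap c b * Equiv.swap a c * Equiv.swap c b := by
        rw [Equiv.swap_mul_swap_mul_swap hac.symm (Ne.symm hab'), Equiv.swap_comm]
      rw [hswap, map_mul, map_mul]
      have h1 : ρ (Equiv.swap c b) = Pg n N N c b := by
        have := hρ (c:ℕ) hcb
        have hcc : c = ⟨(c:ℕ), Nat.lt_of_succ_lt hcb⟩ := by simp
        rw [← hbc] at this
        rw [← hcc] at this
        exact this
      have h2 : ρ (Equiv.swap a c) = Pg n N N a c := ih a c (by simp [hc])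
      rw [h1, h2, mul_assoc]
      have := pg_braid n N N a c hcb (by simp [hc])
      rw [← hbc] at this
      exact this
  rcases Nat.lt_trichotomy (a:ℕ) (b:ℕ) with hlt | heq | hgt
  · exact key ((b:ℕ) - (a:ℕ) - 1) a b (by omega)
  · exact absurd (Fin.ext heq) hab
  · rw [Equiv.swap_comm, key ((a:ℕ) - (b:ℕ) - 1) b a (by omega),
      pg_idx_comm n N N b a (by simp only [ne_eq, Fin.ext_iff]; omega)]

lemma pg_mulVec_omega (i : ℕ) (a b : Fin N) (hab : a ≠ b) :
    Matrix.mulVec (Pg n N N a b) (OmegaVec N i ρ) = ((-1:ℂ)^i) • OmegaVec N i ρ := by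
  rw [← pg_eq_rho ρ hρ a b hab]
  unfold OmegaVec
  show (ρ (Equiv.swap a b)).mulVecLin _ = _
  rw [map_sum]
  have step : ∀ σ : Equiv.Perm (Fin N),
      (ρ (Equiv.swap a b)).mulVecLin
        ((((Equiv.Perm.sign σ : ℤ) : ℂ) ^ i) • (ρ σ).mulVec (baseVec N))
      = ((-1:ℂ)^i) • ((((Equiv.Perm.sign (Equiv.swap a b * σ) : ℤ) : ℂ) ^ i) •
          (ρ (Equiv.swap a b * σ)).mulVec (baseVec N)) := by
    intro σ
    rw [map_smul]
    have h1 : (ρ (Equiv.swap a b)).mulVecLin ((ρ σ).mulVec (baseVec N))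
        = (ρ (Equiv.swap a b * σ)).mulVec (baseVec N) := by
      show (ρ (Equiv.swap a b)).mulVec ((ρ σ).mulVec (baseVec N)) = _
      rw [Matrix.mulVec_mulVec, ← map_mul]
    rw [h1]
    rw [smul_smul]
    congr 1
    rw [Equiv.Perm.sign_mul, Equiv.Perm.sign_swap hab]
    push_cast
    rw [mul_pow, ← mul_assoc, ← pow_add]
    have h2 : ((-1:ℂ))^(i+i) = 1 := Even.neg_one_pow ⟨i, rfl⟩
    rw [h2, one_mul]
  rw [Finset.sum_congr rfl (fun σ _ => step σ), ← Finset.smul_sum]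
  congr 1
  apply Fintype.sum_equiv (Equiv.mulLeft (Equiv.swap a b))
  intro σ
  rfl

lemma dot_omega_pg (i : ℕ) (a b : Fin N) (hab : a ≠ b) (v : (Fin N → Fin N) → ℂ) :
    dotProduct (OmegaVec N i ρ) (Matrix.mulVec (Pg n N N a b) v)
      = ((-1:ℂ)^i) * dotProduct (OmegaVec N i ρ) v := by
  rw [Matrix.dotProduct_mulVec]
  have hv : Matrix.vecMul (OmegaVec N i ρ) (Pg n N N a b)
      = Matrix.mulVec (Pg n N N a b) (OmegaVec N i ρ) := by
    funext x
    unfold Matrix.vecMul Matrix.mulVec dotProduct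
    apply Finset.sum_congr rfl
    intro y _
    show OmegaVec N i ρ y * Pg n N N a b y x = Pg n N N a b x y * OmegaVec N i ρ y
    rw [pg_symm_entry n N N a b hab y x, mul_comm]
  rw [hv, pg_mulVec_omega ρ hρ i a b hab, smul_dotProduct]
  simp

end Glnm

namespace Glnm

/-- the diagonal "λ-weight" operator in slot `a` -/
noncomputable def Lop (n N k : ℕ) (lam : Fin N → ℂ) (a : Fin k) :
    Matrix (Fin k → Fin N) (Fin k → Fin N) ℂ :=
  ∑ c : Fin N, lam c • eop n N k a c c

lemma eop_diag (n N k : ℕ) (j : Fin k) (c : Fin N) (x y : Fin k → Fin N) :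
    eop n N k j c c x y = if x j = c ∧ y = x then 1 else 0 := by
  rw [eop_apply']
  by_cases h : x j = c
  · have hupd : Function.update x j c = x := by rw [← h]; exact Function.update_eq_self j x
    rw [hupd]
    by_cases h2 : y = x
    · rw [if_pos ⟨h, h2⟩, if_pos ⟨h, h2⟩]
      exact Even.neg_one_pow ⟨(par n N c) *
        ∑ l ∈ Finset.univ.filter (fun l : Fin k => l < j), par n N (x l), by ring⟩
    · rw [if_neg (fun hc => h2 hc.2), if_neg (fun hc => h2 hc.2)]
  · rw [if_neg (fun hc => h hc.1), if_neg (fun hc => h hc.1)]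

lemma Lop_apply (n N k : ℕ) (lam : Fin N → ℂ) (a : Fin k) (x y : Fin k → Fin N) :
    Lop n N k lam a x y = if y = x then lam (x a) else 0 := by
  unfold Lop
  simp only [Matrix.sum_apply, Matrix.smul_apply, eop_diag, smul_eq_mul]
  rw [Finset.sum_eq_single (x a)]
  · by_cases h : y = x
    · rw [if_pos ⟨rfl, h⟩, mul_one, if_pos h]
    · rw [if_neg (fun hc => h hc.2), mul_zero, if_neg h]
  · intro c _ hc
    rw [if_neg (fun h => hc h.1.symm), mul_zero]
  · simp

/-- multiplying by a diagonal-like matrix on the left -/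
lemma dmul {k N : ℕ} (d : (Fin k → Fin N) → ℂ)
    (D M : Matrix (Fin k → Fin N) (Fin k → Fin N) ℂ)
    (hD : ∀ x y, D x y = if y = x then d x else 0) (x y : Fin k → Fin N) :
    (D * M) x y = d x * M x y := by
  rw [Matrix.mul_apply, Finset.sum_eq_single x]
  · rw [hD, if_pos rfl]
  · intro u _ hu; rw [hD, if_neg hu, zero_mul]
  · simp

/-- multiplying by a diagonal-like matrix on the right -/
lemma muld {k N : ℕ} (d : (Fin k → Fin N) → ℂ)
    (D M : Matrix (Fin k → Fin N) (Fin k → Fin N) ℂ)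
    (hD : ∀ x y, D x y = if y = x then d x else 0) (x y : Fin k → Fin N) :
    (M * D) x y = M x y * d y := by
  rw [Matrix.mul_apply, Finset.sum_eq_single y]
  · rw [hD, if_pos rfl]
  · intro u _ hu; rw [hD, if_neg (fun h => hu h.symm), mul_zero]
  · simp

lemma sum_Lop_sq (n N k : ℕ) (lam : Fin N → ℂ) :
    ∑ a : Fin k, (Lop n N k lam a * Lop n N k lam a)
      = ∑ c : Fin N, (lam c)^2 • Egen n N k c c := by
  ext x y
  simp only [Matrix.sum_apply, Matrix.smul_apply, smul_eq_mul]
  have hL : ∀ a : Fin k, (Lop n N k lam a * Lop n N k lam a) x y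
      = lam (x a) * (if y = x then lam (x a) else 0) := by
    intro a
    rw [dmul (fun x => lam (x a)) _ _ (fun x y => Lop_apply n N k lam a x y), Lop_apply]
  simp only [hL]
  have hE : ∀ c : Fin N, Egen n N k c c x y
      = if y = x then ((Finset.univ.filter (fun j : Fin k => x j = c)).card : ℂ) else 0 := by
    intro c
    unfold Egen
    simp only [Matrix.sum_apply, eop_diag]
    by_cases h : y = x
    · rw [if_pos h]
      rw [Finset.card_filter]
      push_cast
      apply Finset.sum_congr rfl
      intro j _
      by_cases hj : x j = c
      · rw [if_pos ⟨hj, h⟩, if_pos hj]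
      · rw [if_neg (fun hc => hj hc.1), if_neg hj]
    · rw [if_neg h, Finset.sum_eq_zero]
      intro j _
      rw [if_neg (fun hc => h hc.2)]
  simp only [hE]
  by_cases h : y = x
  · simp only [if_pos h]
    have hstep : ∀ a : Fin k, lam (x a) * lam (x a)
        = ∑ c : Fin N, (if x a = c then (lam c)^2 else 0) := by
      intro a
      rw [Finset.sum_ite_eq Finset.univ (x a) (fun c => (lam c)^2)]
      simp [pow_two]
    rw [Finset.sum_congr rfl (fun a _ => hstep a), Finset.sum_comm]
    apply Finset.sum_congr rfl
    intro c _
    rw [Finset.card_filter]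
    push_cast
    rw [Finset.mul_sum]
    apply Finset.sum_congr rfl
    intro a _
    by_cases hc : x a = c
    · rw [if_pos hc, if_pos hc, mul_one]
    · rw [if_neg hc, if_neg hc, mul_zero]
  · simp only [if_neg h, mul_zero]
    simp

lemma Lop_mul_Pg (n N k : ℕ) (lam : Fin N → ℂ) (a j : Fin k) (haj : a ≠ j) :
    Lop n N k lam a * Pg n N k a j = Pg n N k a j * Lop n N k lam j := by
  ext x y
  rw [dmul (fun x => lam (x a)) _ _ (fun x y => Lop_apply n N k lam a x y),
    muld (fun x => lam (x j)) _ _ (fun x y => Lop_apply n N k lam j x y)]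
  rw [pg_apply n N k a j haj]
  by_cases h : y = x ∘ (Equiv.swap a j)
  · rw [if_pos h]
    have : y j = x a := by rw [h]; simp [Equiv.swap_apply_right]
    rw [this, mul_comm]
  · rw [if_neg h, mul_zero, zero_mul]

end Glnm

namespace Glnm

lemma sum_antisym {N : ℕ} (f : Fin N → Fin N → ℂ) (hf : ∀ a j, a ≠ j → f a j = - f j a) :
    ∑ a : Fin N, ∑ j ∈ Finset.univ.filter (fun j => j ≠ a), f a j = 0 := by
  have key : ∑ a : Fin N, ∑ j ∈ Finset.univ.filter (fun j => j ≠ a), f a j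
      = ∑ a : Fin N, ∑ j : Fin N, (if j = a then 0 else f a j) := by
    apply Finset.sum_congr rfl
    intro a _
    rw [Finset.sum_filter]
    apply Finset.sum_congr rfl
    intro j _
    rw [ite_not]
  rw [key]
  have key2 : ∑ a : Fin N, ∑ j : Fin N, (if j = a then 0 else f a j)
      = - ∑ a : Fin N, ∑ j : Fin N, (if j = a then 0 else f a j) := by
    conv_lhs => rw [Finset.sum_comm]
    rw [← Finset.sum_neg_distrib]
    apply Finset.sum_congr rfl
    intro a _
    rw [← Finset.sum_neg_distrib]
    apply Finset.sum_congr rfl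
    intro j _
    by_cases h : j = a
    · rw [if_pos h, h, if_pos rfl, neg_zero]
    · rw [if_neg (fun hc => h hc.symm), if_neg h, hf j a (fun hc => h hc)]
  set S := ∑ a : Fin N, ∑ j : Fin N, (if j = a then 0 else f a j)
  have h2 : S + S = 0 := by nth_rewrite 2 [key2]; ring
  rw [add_self_eq_zero.mp h2]

end Glnm

namespace Glnm

lemma triple_cyclic_zero {N : ℕ} (z : Fin N → ℂ) (hz : ∀ a b : Fin N, a ≠ b → z a ≠ z b) :
    ∑ a : Fin N, ∑ j ∈ Finset.univ.filter (fun j => j ≠ a),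
      ∑ l ∈ Finset.univ.filter (fun l => l ≠ a ∧ l ≠ j),
        (z a - z j)⁻¹ * (z a - z l)⁻¹ = 0 := by
  classical
  set T : Finset (Fin N × Fin N × Fin N) :=
    Finset.univ.filter (fun t => t.2.1 ≠ t.1 ∧ t.2.2 ≠ t.1 ∧ t.2.2 ≠ t.2.1) with hT
  set f : Fin N × Fin N × Fin N → ℂ :=
    fun t => (z t.1 - z t.2.1)⁻¹ * (z t.1 - z t.2.2)⁻¹ with hf
  have claim1 : ∑ a : Fin N, ∑ j ∈ Finset.univ.filter (fun j => j ≠ a),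
      ∑ l ∈ Finset.univ.filter (fun l => l ≠ a ∧ l ≠ j),
        (z a - z j)⁻¹ * (z a - z l)⁻¹ = ∑ t ∈ T, f t := by
    rw [hT, Finset.sum_filter, Fintype.sum_prod_type]
    apply Finset.sum_congr rfl
    intro a _
    rw [Fintype.sum_prod_type, Finset.sum_filter]
    apply Finset.sum_congr rfl
    intro j _
    rw [Finset.sum_filter]
    by_cases hj : j ≠ a
    · rw [if_pos hj]
      apply Finset.sum_congr rfl
      intro l _
      by_cases hl : l ≠ a ∧ l ≠ j
      · rw [if_pos hl, if_pos ⟨hj, hl⟩]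
      · rw [if_neg hl, if_neg (fun hc => hl ⟨hc.2.1, hc.2.2⟩)]
    · rw [if_neg hj, Finset.sum_eq_zero]
      intro l _
      rw [if_neg (fun hc => hj hc.1)]
  rw [claim1]
  set cyc : Fin N × Fin N × Fin N → Fin N × Fin N × Fin N :=
    fun t => (t.2.1, t.2.2, t.1) with hcyc
  have hmem : ∀ t ∈ T, cyc t ∈ T := by
    intro t ht
    simp only [hT, Finset.mem_filter, Finset.mem_univ, true_and] at ht ⊢
    exact ⟨ht.2.2, (Ne.symm ht.1), (Ne.symm ht.2.1)⟩
  have hcyc3 : ∀ t, cyc (cyc (cyc t)) = t := fun t => rfl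
  have step : ∀ g : Fin N × Fin N × Fin N → ℂ,
      ∑ t ∈ T, g (cyc t) = ∑ t ∈ T, g t := by
    intro g
    apply Finset.sum_nbij' (i := fun t => cyc t) (j := fun t => cyc (cyc t))
    · exact hmem
    · intro t ht; exact hmem _ (hmem _ ht)
    · intro t _; exact hcyc3 t
    · intro t _; rw [← hcyc3 (cyc t)]
    · intro t _; rfl
  have h3 : (3:ℂ) * ∑ t ∈ T, f t = 0 := by
    have e1 : ∑ t ∈ T, f (cyc t) = ∑ t ∈ T, f t := step f
    have e2 : ∑ t ∈ T, f (cyc (cyc t)) = ∑ t ∈ T, f t := by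
      rw [← step f]
      exact step (fun t => f (cyc t))
    have esum : ∑ t ∈ T, (f t + f (cyc t) + f (cyc (cyc t))) = (3:ℂ) * ∑ t ∈ T, f t := by
      rw [Finset.sum_add_distrib, Finset.sum_add_distrib, e1, e2]
      ring
    rw [← esum]
    apply Finset.sum_eq_zero
    intro t ht
    simp only [hT, Finset.mem_filter, Finset.mem_univ, true_and] at ht
    obtain ⟨h1, h2, h3⟩ := ht
    have d1 : z t.1 - z t.2.1 ≠ 0 := sub_ne_zero_of_ne (hz _ _ (Ne.symm h1))
    have d2 : z t.1 - z t.2.2 ≠ 0 := sub_ne_zero_of_ne (hz _ _ (Ne.symm h2))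
    have d3 : z t.2.1 - z t.2.2 ≠ 0 := sub_ne_zero_of_ne (hz _ _ (Ne.symm h3))
    have d4 : z t.2.1 - z t.1 ≠ 0 := sub_ne_zero_of_ne (hz _ _ h1)
    have d5 : z t.2.2 - z t.1 ≠ 0 := sub_ne_zero_of_ne (hz _ _ h2)
    have d6 : z t.2.2 - z t.2.1 ≠ 0 := sub_ne_zero_of_ne (hz _ _ h3)
    simp only [hf, hcyc]
    field_simp
    ring
  have := mul_eq_zero.mp h3
  rcases this with h | h
  · norm_num at h
  · exact h

end Glnm

namespace Glnm

lemma mulVec_finsum {V : Type*} [Fintype V] [DecidableEq V] {α : Type*} (s : Finset α)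
    (M : α → Matrix V V ℂ) (v : V → ℂ) :
    (∑ a ∈ s, M a).mulVec v = ∑ a ∈ s, (M a).mulVec v := by
  induction s using Finset.cons_induction with
  | empty => simp [Matrix.mulVec]
  | cons a s ha ih => rw [Finset.sum_cons, Finset.sum_cons, Matrix.add_mulVec, ih]

lemma dot_finsum {V : Type*} [Fintype V] {α : Type*} (s : Finset α)
    (w : α → V → ℂ) (v : V → ℂ) :
    dotProduct v (∑ a ∈ s, w a) = ∑ a ∈ s, dotProduct v (w a) := by
  induction s using Finset.cons_induction with
  | empty => simp
  | cons a s ha ih => rw [Finset.sum_cons, Finset.sum_cons, dotProduct_add, ih]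

variable {n N : ℕ}
  (ρ : Equiv.Perm (Fin N) →* Matrix (Fin N → Fin N) (Fin N → Fin N) ℂ)
  (hρ : ∀ (l : ℕ) (h : l + 1 < N),
    ρ (Equiv.swap ⟨l, Nat.lt_of_succ_lt h⟩ ⟨l + 1, h⟩) =
      Pg n N N ⟨l, Nat.lt_of_succ_lt h⟩ ⟨l + 1, h⟩)

include hρ

lemma core (i : ℕ) (z lam : Fin N → ℂ)
    (hz : ∀ a b : Fin N, a ≠ b → z a ≠ z b)
    (v : (Fin N → Fin N) → ℂ)
    (hv : ∀ c : Fin N, Matrix.mulVec (Egen n N N c c) v = v) :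
    ∑ a : Fin N, dotProduct (OmegaVec N i ρ)
        (Matrix.mulVec (kzB n N N z lam a * kzB n N N z lam a) v)
      = (∑ c : Fin N, (lam c)^2
        + ∑ a : Fin N, ∑ j ∈ Finset.univ.filter (fun j => j ≠ a), ((z a - z j)⁻¹)^2)
        * dotProduct (OmegaVec N i ρ) v := by
  classical
  set Ω := OmegaVec N i ρ with hΩ
  set L : Fin N → Matrix (Fin N → Fin N) (Fin N → Fin N) ℂ :=
    fun a => Lop n N N lam a with hLdef
  set C : Fin N → Matrix (Fin N → Fin N) (Fin N → Fin N) ℂ :=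
    fun a => ∑ j ∈ Finset.univ.filter (fun j => j ≠ a), (z a - z j)⁻¹ • Pg n N N a j with hCdef
  have hkzB : ∀ a, kzB n N N z lam a = L a + C a := fun a => rfl
  have hsq : ∀ a, kzB n N N z lam a * kzB n N N z lam a
      = L a * L a + (L a * C a + (C a * L a + C a * C a)) := by
    intro a
    rw [hkzB]
    noncomm_ring
  simp only [hsq, Matrix.add_mulVec, dotProduct_add, Finset.sum_add_distrib]
  set g : Fin N → ℂ := fun b => dotProduct Ω ((L b).mulVec v) with hg
  -- Term 1
  have hT1 : ∑ a : Fin N, dotProduct Ω ((L a * L a).mulVec v)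
      = (∑ c : Fin N, (lam c)^2) * dotProduct Ω v := by
    rw [← dot_finsum, ← mulVec_finsum]
    have : ∑ a : Fin N, (L a * L a) = ∑ c : Fin N, (lam c)^2 • Egen n N N c c :=
      sum_Lop_sq n N N lam
    rw [this, mulVec_finsum, dot_finsum]
    rw [Finset.sum_mul]
    apply Finset.sum_congr rfl
    intro c _
    rw [Matrix.smul_mulVec, hv c, dotProduct_smul, smul_eq_mul]
  -- Term 2
  have hLC : ∀ a : Fin N, dotProduct Ω ((L a * C a).mulVec v)
      = ∑ j ∈ Finset.univ.filter (fun j => j ≠ a),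
          (z a - z j)⁻¹ * ((-1:ℂ)^i * g j) := by
    intro a
    rw [hCdef]
    simp only [Finset.mul_sum]
    rw [mulVec_finsum, dot_finsum]
    apply Finset.sum_congr rfl
    intro j hj
    simp only [Finset.mem_filter, Finset.mem_univ, true_and] at hj
    rw [Matrix.mul_smul, Lop_mul_Pg n N N lam a j (Ne.symm hj),
      Matrix.smul_mulVec, dotProduct_smul, smul_eq_mul]
    congr 1
    rw [← Matrix.mulVec_mulVec, dot_omega_pg ρ hρ i a j (Ne.symm hj)]
  -- Term 3
  have hCL : ∀ a : Fin N, dotProduct Ω ((C a * L a).mulVec v)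
      = ∑ j ∈ Finset.univ.filter (fun j => j ≠ a),
          (z a - z j)⁻¹ * ((-1:ℂ)^i * g a) := by
    intro a
    rw [hCdef]
    simp only [Finset.sum_mul]
    rw [mulVec_finsum, dot_finsum]
    apply Finset.sum_congr rfl
    intro j hj
    simp only [Finset.mem_filter, Finset.mem_univ, true_and] at hj
    rw [Matrix.smul_mul, Matrix.smul_mulVec, dotProduct_smul, smul_eq_mul]
    congr 1
    rw [← Matrix.mulVec_mulVec, dot_omega_pg ρ hρ i a j (Ne.symm hj)]
  have hT23 : (∑ a : Fin N, dotProduct Ω ((L a * C a).mulVec v))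
      + (∑ a : Fin N, dotProduct Ω ((C a * L a).mulVec v)) = 0 := by
    simp only [hLC, hCL]
    rw [← Finset.sum_add_distrib]
    have : ∀ a : Fin N, (∑ j ∈ Finset.univ.filter (fun j => j ≠ a),
          (z a - z j)⁻¹ * ((-1:ℂ)^i * g j))
        + (∑ j ∈ Finset.univ.filter (fun j => j ≠ a),
          (z a - z j)⁻¹ * ((-1:ℂ)^i * g a))
        = ∑ j ∈ Finset.univ.filter (fun j => j ≠ a),
            (z a - z j)⁻¹ * ((-1:ℂ)^i * (g j + g a)) := by
      intro a
      rw [← Finset.sum_add_distrib]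
      apply Finset.sum_congr rfl
      intro j _
      ring
    simp only [this]
    apply sum_antisym
    intro a j haj
    have : (z j - z a) = -(z a - z j) := by ring
    rw [this, inv_neg]
    ring
  -- Term 4
  have hPP : ∀ (a j l : Fin N), j ≠ a → l ≠ a →
      dotProduct Ω ((Pg n N N a j * Pg n N N a l).mulVec v)
        = dotProduct Ω v := by
    intro a j l hj hl
    rw [← Matrix.mulVec_mulVec, dot_omega_pg ρ hρ i a j (Ne.symm hj),
      dot_omega_pg ρ hρ i a l (Ne.symm hl), ← mul_assoc, ← pow_add,
      Even.neg_one_pow ⟨i, rfl⟩, one_mul]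
  have hT4 : ∑ a : Fin N, dotProduct Ω ((C a * C a).mulVec v)
      = (∑ a : Fin N, ∑ j ∈ Finset.univ.filter (fun j => j ≠ a), ((z a - z j)⁻¹)^2)
          * dotProduct Ω v := by
    have hCC : ∀ a : Fin N, dotProduct Ω ((C a * C a).mulVec v)
        = ∑ j ∈ Finset.univ.filter (fun j => j ≠ a),
            ∑ l ∈ Finset.univ.filter (fun l => l ≠ a),
              ((z a - z j)⁻¹ * (z a - z l)⁻¹) * dotProduct Ω v := by
      intro a
      rw [hCdef]
      simp only [Finset.sum_mul, Finset.mul_sum]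
      rw [mulVec_finsum, dot_finsum]
      apply Finset.sum_congr rfl
      intro j hj
      rw [mulVec_finsum, dot_finsum]
      apply Finset.sum_congr rfl
      intro l hl
      simp only [Finset.mem_filter, Finset.mem_univ, true_and] at hj hl
      rw [Matrix.smul_mul, Matrix.mul_smul, Matrix.smul_mulVec,
        Matrix.smul_mulVec, dotProduct_smul, dotProduct_smul,
        smul_eq_mul, smul_eq_mul, hPP a l j hl hj]
      ring
    simp only [hCC]
    rw [Finset.sum_mul]
    have hsplit : ∀ a : Fin N,
        ∑ j ∈ Finset.univ.filter (fun j => j ≠ a),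
          ∑ l ∈ Finset.univ.filter (fun l => l ≠ a),
            ((z a - z j)⁻¹ * (z a - z l)⁻¹) * dotProduct Ω v
        = (∑ j ∈ Finset.univ.filter (fun j => j ≠ a),
              ((z a - z j)⁻¹)^2 * dotProduct Ω v)
          + ∑ j ∈ Finset.univ.filter (fun j => j ≠ a),
              ∑ l ∈ Finset.univ.filter (fun l => l ≠ a ∧ l ≠ j),
                ((z a - z j)⁻¹ * (z a - z l)⁻¹) * dotProduct Ω v := by
      intro a
      rw [← Finset.sum_add_distrib]
      apply Finset.sum_congr rfl
      intro j hj
      simp only [Finset.mem_filter, Finset.mem_univ, true_and] at hj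
      have hins : Finset.univ.filter (fun l : Fin N => l ≠ a)
          = insert j (Finset.univ.filter (fun l : Fin N => l ≠ a ∧ l ≠ j)) := by
        ext l
        simp only [Finset.mem_filter, Finset.mem_univ, true_and, Finset.mem_insert]
        constructor
        · intro h
          by_cases hlj : l = j
          · exact Or.inl hlj
          · exact Or.inr ⟨h, hlj⟩
        · rintro (h | h)
          · rw [h]; exact hj
          · exact h.1
      rw [hins, Finset.sum_insert (by simp)]
      congr 1
      ring
    simp only [hsplit]
    rw [Finset.sum_add_distrib]
    have hz3 : ∑ a : Fin N, ∑ j ∈ Finset.univ.filter (fun j => j ≠ a),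
        ∑ l ∈ Finset.univ.filter (fun l => l ≠ a ∧ l ≠ j),
          ((z a - z j)⁻¹ * (z a - z l)⁻¹) * dotProduct Ω v = 0 := by
      have := triple_cyclic_zero z hz
      calc ∑ a : Fin N, ∑ j ∈ Finset.univ.filter (fun j => j ≠ a),
            ∑ l ∈ Finset.univ.filter (fun l => l ≠ a ∧ l ≠ j),
              ((z a - z j)⁻¹ * (z a - z l)⁻¹) * dotProduct Ω v
          = (∑ a : Fin N, ∑ j ∈ Finset.univ.filter (fun j => j ≠ a),
            ∑ l ∈ Finset.univ.filter (fun l => l ≠ a ∧ l ≠ j),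
              (z a - z j)⁻¹ * (z a - z l)⁻¹) * dotProduct Ω v := by
            rw [Finset.sum_mul]
            apply Finset.sum_congr rfl
            intro a _
            rw [Finset.sum_mul]
            apply Finset.sum_congr rfl
            intro j _
            rw [Finset.sum_mul]
        _ = 0 := by rw [this, zero_mul]
    rw [hz3, add_zero]
    apply Finset.sum_congr rfl
    intro a _
    rw [Finset.sum_mul]
  rw [hT1, hT4]
  linear_combination hT23

end Glnm

namespace Glnm

/-- dot with a fixed vector as a continuous linear map -/
noncomputable def dCLM {V : Type*} [Fintype V] [DecidableEq V] (w : V → ℂ) :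
    (V → ℂ) →L[ℂ] ℂ :=
  LinearMap.toContinuousLinearMap
    { toFun := fun v => dotProduct w v
      map_add' := fun u v => dotProduct_add w u v
      map_smul' := fun c v => by
        simp only [dotProduct_smul, smul_eq_mul, RingHom.id_apply] }

@[simp] lemma dCLM_apply {V : Type*} [Fintype V] [DecidableEq V] (w v : V → ℂ) :
    dCLM w v = dotProduct w v := rfl

/-- dot with a fixed vector, after applying a fixed matrix, as a continuous linear map -/
noncomputable def dmCLM {V : Type*} [Fintype V] [DecidableEq V] (w : V → ℂ)
    (M : Matrix V V ℂ) : (V → ℂ) →L[ℂ] ℂ :=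
  LinearMap.toContinuousLinearMap
    { toFun := fun v => dotProduct w (M.mulVec v)
      map_add' := fun u v => by
        show dotProduct w (M.mulVec (u + v)) = _
        rw [Matrix.mulVec_add, dotProduct_add]
      map_smul' := fun c v => by
        simp only [Matrix.mulVec_smul, dotProduct_smul, smul_eq_mul,
          RingHom.id_apply] }

@[simp] lemma dmCLM_apply {V : Type*} [Fintype V] [DecidableEq V] (w : V → ℂ)
    (M : Matrix V V ℂ) (v : V → ℂ) :
    dmCLM w M v = dotProduct w (M.mulVec v) := rfl

lemma usep_open (N : ℕ) : IsOpen (Usep N) := by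
  have h1 : Usep N = (⋂ (i : Fin N) (j : Fin N) (_ : i ≠ j),
      {p : (Fin N → ℂ) × (Fin N → ℂ) | p.1 i ≠ p.1 j}) ∩
      (⋂ (a : Fin N) (b : Fin N) (_ : a ≠ b),
      {p : (Fin N → ℂ) × (Fin N → ℂ) | p.2 a ≠ p.2 b}) := by
    ext p
    simp only [Usep, Set.mem_setOf_eq, Set.mem_inter_iff, Set.mem_iInter]
  rw [h1]
  apply IsOpen.inter
  · apply isOpen_iInter_of_finite
    intro i
    apply isOpen_iInter_of_finite
    intro j
    apply isOpen_iInter_of_finite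
    intro _
    have : Continuous (fun p : (Fin N → ℂ) × (Fin N → ℂ) => p.1 i - p.1 j) :=
      ((continuous_apply i).comp continuous_fst).sub
        ((continuous_apply j).comp continuous_fst)
    have h2 : {p : (Fin N → ℂ) × (Fin N → ℂ) | p.1 i ≠ p.1 j}
        = (fun p : (Fin N → ℂ) × (Fin N → ℂ) => p.1 i - p.1 j) ⁻¹' {0}ᶜ := by
      ext p; simp [sub_eq_zero]
    rw [h2]
    exact (isOpen_compl_singleton).preimage this
  · apply isOpen_iInter_of_finite
    intro a
    apply isOpen_iInter_of_finite
    intro b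
    apply isOpen_iInter_of_finite
    intro _
    have : Continuous (fun p : (Fin N → ℂ) × (Fin N → ℂ) => p.2 a - p.2 b) :=
      ((continuous_apply a).comp continuous_snd).sub
        ((continuous_apply b).comp continuous_snd)
    have h2 : {p : (Fin N → ℂ) × (Fin N → ℂ) | p.2 a ≠ p.2 b}
        = (fun p : (Fin N → ℂ) × (Fin N → ℂ) => p.2 a - p.2 b) ⁻¹' {0}ᶜ := by
      ext p; simp [sub_eq_zero]
    rw [h2]
    exact (isOpen_compl_singleton).preimage this

lemma hasFDerivAt_inv_comp {E : Type*} [NormedAddCommGroup E] [NormedSpace ℂ E]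
    (f : E → ℂ) (f' : E →L[ℂ] ℂ) (x : E) (hf : HasFDerivAt f f' x) (h0 : f x ≠ 0) :
    HasFDerivAt (fun y => (f y)⁻¹) ((-((f x)^2)⁻¹) • f') x := by
  have h := (hasFDerivAt_inv' (𝕜 := ℂ) h0).comp x hf
  have heq : ((-ContinuousLinearMap.mulLeftRight ℂ ℂ (f x)⁻¹ (f x)⁻¹).comp f')
      = (-((f x)^2)⁻¹) • f' := by
    ext w
    simp only [ContinuousLinearMap.comp_apply, ContinuousLinearMap.neg_apply,
      ContinuousLinearMap.mulLeftRight_apply, ContinuousLinearMap.smul_apply,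
      smul_eq_mul]
    rw [pow_two, mul_inv]
    ring
  rw [heq] at h
  exact h

/-- expansion of `dot Ω (kzB.mulVec u)` -/
lemma dot_kzB_expand {n N : ℕ} (Ω : (Fin N → Fin N) → ℂ) (z lam : Fin N → ℂ)
    (a : Fin N) (u : (Fin N → Fin N) → ℂ) :
    dotProduct Ω ((kzB n N N z lam a).mulVec u)
      = (∑ c : Fin N, lam c * dotProduct Ω ((eop n N N a c c).mulVec u))
        + ∑ j ∈ Finset.univ.filter (fun j => j ≠ a),
            (z a - z j)⁻¹ * dotProduct Ω ((Pg n N N a j).mulVec u) := by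
  unfold kzB
  rw [Matrix.add_mulVec, dotProduct_add, mulVec_finsum, mulVec_finsum,
    dot_finsum, dot_finsum]
  congr 1
  · apply Finset.sum_congr rfl
    intro c _
    rw [Matrix.smul_mulVec, dotProduct_smul, smul_eq_mul]
  · apply Finset.sum_congr rfl
    intro j _
    rw [Matrix.smul_mulVec, dotProduct_smul, smul_eq_mul]

end Glnm

open Glnm in
/-- Matsuo–Cherednik map, KZ side: `φ_i = Ω^i ⬝ Ψ` satisfies
the Calogero-type eigenvalue equation in the `z` variables with eigenvalue `∑ λ_a²`. -/
theorem matsuo_cherednik_kz (n m : ℕ) (κ : ℂ) (hκ : κ ≠ 0)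
    (Ψ : (Fin (n + m) → ℂ) × (Fin (n + m) → ℂ) → ((Fin (n + m) → Fin (n + m)) → ℂ))
    (hdiff : ∀ p ∈ Usep (n + m), DifferentiableAt ℂ Ψ p)
    (hKZ : ∀ p ∈ Usep (n + m), ∀ j : Fin (n + m),
      κ • (fderiv ℂ Ψ p (Pi.single j 1, 0)) =
        Matrix.mulVec (kzB n (n + m) (n + m) p.1 p.2 j) (Ψ p))
    (hDyn : ∀ p ∈ Usep (n + m), ∀ a : Fin (n + m),
      κ • (fderiv ℂ Ψ p (0, Pi.single a 1)) =
        Matrix.mulVec (dynA n (n + m) (n + m) p.1 p.2 a) (Ψ p))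
    (hwt : ∀ p ∈ Usep (n + m), ∀ a : Fin (n + m),
      Matrix.mulVec (Egen n (n + m) (n + m) a a) (Ψ p) = Ψ p)
    (i : ℕ) (hi : i = 0 ∨ i = 1)
    (ρ : Equiv.Perm (Fin (n + m)) →*
      Matrix (Fin (n + m) → Fin (n + m)) (Fin (n + m) → Fin (n + m)) ℂ)
    (hρ : ∀ (l : ℕ) (h : l + 1 < n + m),
      ρ (Equiv.swap ⟨l, Nat.lt_of_succ_lt h⟩ ⟨l + 1, h⟩) =
        Pg n (n + m) (n + m) ⟨l, Nat.lt_of_succ_lt h⟩ ⟨l + 1, h⟩) :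
    ∀ p ∈ Usep (n + m),
      κ ^ 2 * (∑ a : Fin (n + m),
          fderiv ℂ
            (fun q =>
              fderiv ℂ (fun r => dotProduct (OmegaVec (n + m) i ρ) (Ψ r)) q
                (Pi.single a 1, 0))
            p (Pi.single a 1, 0)) +
        (∑ a : Fin (n + m), ∑ b ∈ Finset.univ.filter (fun b : Fin (n + m) => b ≠ a),
            ((-1 : ℂ) ^ i * κ - 1) / (p.1 a - p.1 b) ^ 2) *
          dotProduct (OmegaVec (n + m) i ρ) (Ψ p) =
      (∑ a : Fin (n + m), (p.2 a) ^ 2) *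
        dotProduct (OmegaVec (n + m) i ρ) (Ψ p) := by
  classical
  intro p hp
  set Ω := OmegaVec (n + m) i ρ with hΩ
  -- derivative of Ψ in coordinate directions
  have hΨder : ∀ q ∈ Usep (n + m), ∀ a : Fin (n + m),
      fderiv ℂ Ψ q ((Pi.single a 1 : Fin (n+m) → ℂ), (0 : Fin (n+m) → ℂ))
        = κ⁻¹ • (Matrix.mulVec (kzB n (n+m) (n+m) q.1 q.2 a) (Ψ q)) := by
    intro q hq a
    rw [← hKZ q hq a, smul_smul, inv_mul_cancel₀ hκ, one_smul]
  -- formula for the inner fderiv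
  have hinner : ∀ q ∈ Usep (n + m),
      fderiv ℂ (fun r => dotProduct Ω (Ψ r)) q
        = (dCLM Ω).comp (fderiv ℂ Ψ q) := by
    intro q hq
    exact ((dCLM Ω).hasFDerivAt.comp q (hdiff q hq).hasFDerivAt).fderiv
  -- the first-derivative scalar function
  set G : Fin (n+m) → ((Fin (n+m) → ℂ) × (Fin (n+m) → ℂ)) → ℂ := fun a q =>
    κ⁻¹ * ((∑ c : Fin (n+m), q.2 c *
        dotProduct Ω ((eop n (n+m) (n+m) a c c).mulVec (Ψ q)))
      + ∑ j ∈ Finset.univ.filter (fun j => j ≠ a),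
          (q.1 a - q.1 j)⁻¹ *
            dotProduct Ω ((Pg n (n+m) (n+m) a j).mulVec (Ψ q))) with hG
  have hGval : ∀ q ∈ Usep (n + m), ∀ a : Fin (n + m),
      fderiv ℂ (fun r => dotProduct Ω (Ψ r)) q
          ((Pi.single a 1 : Fin (n+m) → ℂ), (0 : Fin (n+m) → ℂ)) = G a q := by
    intro q hq a
    rw [hinner q hq]
    rw [ContinuousLinearMap.comp_apply, dCLM_apply, hΨder q hq a,
      dotProduct_smul, smul_eq_mul, dot_kzB_expand]
  -- identify the second derivative
  have hD2 : ∀ a : Fin (n + m),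
      fderiv ℂ (fun q =>
          fderiv ℂ (fun r => dotProduct Ω (Ψ r)) q
            ((Pi.single a 1 : Fin (n+m) → ℂ), (0 : Fin (n+m) → ℂ))) p
        = fderiv ℂ (G a) p := by
    intro a
    apply Filter.EventuallyEq.fderiv_eq
    filter_upwards [(usep_open (n + m)).mem_nhds hp] with q hq
    exact hGval q hq a
  -- derivative of G a at p
  set Dψ := fderiv ℂ Ψ p with hDψ
  have hΨp : HasFDerivAt Ψ Dψ p := (hdiff p hp).hasFDerivAt
  have hFM : ∀ M : Matrix (Fin (n+m) → Fin (n+m)) (Fin (n+m) → Fin (n+m)) ℂ,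
      HasFDerivAt (fun q : (Fin (n+m) → ℂ) × (Fin (n+m) → ℂ) =>
          dotProduct Ω (M.mulVec (Ψ q))) ((dmCLM Ω M).comp Dψ) p :=
    fun M => (dmCLM Ω M).hasFDerivAt.comp p hΨp
  set fApp : Fin (n+m) → (((Fin (n+m) → ℂ) × (Fin (n+m) → ℂ)) →L[ℂ] ℂ) := fun a =>
    (ContinuousLinearMap.proj a).comp
      (ContinuousLinearMap.fst ℂ (Fin (n+m) → ℂ) (Fin (n+m) → ℂ)) with hfApp
  set sApp : Fin (n+m) → (((Fin (n+m) → ℂ) × (Fin (n+m) → ℂ)) →L[ℂ] ℂ) := fun c =>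
    (ContinuousLinearMap.proj c).comp
      (ContinuousLinearMap.snd ℂ (Fin (n+m) → ℂ) (Fin (n+m) → ℂ)) with hsApp
  have hcoord2 : ∀ c : Fin (n+m),
      HasFDerivAt (fun q : (Fin (n+m) → ℂ) × (Fin (n+m) → ℂ) => q.2 c) (sApp c) p :=
    fun c => (sApp c).hasFDerivAt
  have hsubd : ∀ a j : Fin (n+m),
      HasFDerivAt (fun q : (Fin (n+m) → ℂ) × (Fin (n+m) → ℂ) => q.1 a - q.1 j)
        (fApp a - fApp j) p :=
    fun a j => ((fApp a).hasFDerivAt).sub ((fApp j).hasFDerivAt)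
  have hne : ∀ a j : Fin (n+m), j ≠ a → p.1 a - p.1 j ≠ 0 :=
    fun a j h => sub_ne_zero_of_ne (hp.1 a j (Ne.symm h))
  have hinvd : ∀ (a j : Fin (n+m)), j ≠ a →
      HasFDerivAt (fun q : (Fin (n+m) → ℂ) × (Fin (n+m) → ℂ) => (q.1 a - q.1 j)⁻¹)
        ((-((p.1 a - p.1 j)^2)⁻¹) • (fApp a - fApp j)) p :=
    fun a j hj => hasFDerivAt_inv_comp _ _ p (hsubd a j) (hne a j hj)
  have hGa : ∀ a : Fin (n+m), HasFDerivAt (G a)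
      (κ⁻¹ • ((∑ c : Fin (n+m), (p.2 c • ((dmCLM Ω (eop n (n+m) (n+m) a c c)).comp Dψ)
            + (dotProduct Ω ((eop n (n+m) (n+m) a c c).mulVec (Ψ p))) • sApp c))
        + ∑ j ∈ Finset.univ.filter (fun j => j ≠ a),
            ((p.1 a - p.1 j)⁻¹ • ((dmCLM Ω (Pg n (n+m) (n+m) a j)).comp Dψ)
              + (dotProduct Ω ((Pg n (n+m) (n+m) a j).mulVec (Ψ p))) •
                  ((-((p.1 a - p.1 j)^2)⁻¹) • (fApp a - fApp j))))) p := by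
    intro a
    apply HasFDerivAt.const_mul
    apply HasFDerivAt.add
    · apply HasFDerivAt.fun_sum
      intro c _
      exact (hcoord2 c).mul (hFM (eop n (n+m) (n+m) a c c))
    · apply HasFDerivAt.fun_sum
      intro j hj
      simp only [Finset.mem_filter, Finset.mem_univ, true_and] at hj
      exact (hinvd a j hj).mul (hFM (Pg n (n+m) (n+m) a j))
  -- value of Dψ in our direction
  have hDψw : ∀ a : Fin (n+m), Dψ ((Pi.single a 1 : Fin (n+m) → ℂ), (0 : Fin (n+m) → ℂ))
      = κ⁻¹ • ((kzB n (n+m) (n+m) p.1 p.2 a).mulVec (Ψ p)) := fun a => hΨder p hp a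
  have hsval : ∀ c a : Fin (n+m),
      sApp c ((Pi.single a 1 : Fin (n+m) → ℂ), (0 : Fin (n+m) → ℂ)) = 0 := by
    intro c a
    simp [hsApp]
  have hfval1 : ∀ a : Fin (n+m),
      fApp a ((Pi.single a 1 : Fin (n+m) → ℂ), (0 : Fin (n+m) → ℂ)) = 1 := by
    intro a
    simp [hfApp]
  have hfval0 : ∀ a j : Fin (n+m), j ≠ a →
      fApp j ((Pi.single a 1 : Fin (n+m) → ℂ), (0 : Fin (n+m) → ℂ)) = 0 := by
    intro a j hj
    simp [hfApp, Pi.single_eq_of_ne hj]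
  have hκ2D2 : ∀ a : Fin (n+m),
      κ^2 * (fderiv ℂ (G a) p ((Pi.single a 1 : Fin (n+m) → ℂ), (0 : Fin (n+m) → ℂ)))
      = dotProduct Ω
          (((kzB n (n+m) (n+m) p.1 p.2 a) * (kzB n (n+m) (n+m) p.1 p.2 a)).mulVec (Ψ p))
        - κ * ∑ j ∈ Finset.univ.filter (fun j => j ≠ a),
            ((p.1 a - p.1 j)^2)⁻¹ *
              dotProduct Ω ((Pg n (n+m) (n+m) a j).mulVec (Ψ p)) := by
    intro a
    rw [(hGa a).fderiv]
    rw [ContinuousLinearMap.smul_apply, ContinuousLinearMap.add_apply,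
      ContinuousLinearMap.sum_apply, ContinuousLinearMap.sum_apply]
    have hterm1 : ∀ c : Fin (n+m),
        (p.2 c • ((dmCLM Ω (eop n (n+m) (n+m) a c c)).comp Dψ)
          + (dotProduct Ω ((eop n (n+m) (n+m) a c c).mulVec (Ψ p))) • sApp c)
            ((Pi.single a 1 : Fin (n+m) → ℂ), (0 : Fin (n+m) → ℂ))
        = p.2 c * (κ⁻¹ * dotProduct Ω ((eop n (n+m) (n+m) a c c).mulVec
            ((kzB n (n+m) (n+m) p.1 p.2 a).mulVec (Ψ p)))) := by
      intro c
      rw [ContinuousLinearMap.add_apply, ContinuousLinearMap.smul_apply,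
        ContinuousLinearMap.smul_apply, ContinuousLinearMap.comp_apply, dmCLM_apply,
        hDψw a, hsval c a, Matrix.mulVec_smul, dotProduct_smul]
      simp [smul_eq_mul]
    have hterm2 : ∀ j : Fin (n+m), j ≠ a →
        ((p.1 a - p.1 j)⁻¹ • ((dmCLM Ω (Pg n (n+m) (n+m) a j)).comp Dψ)
          + (dotProduct Ω ((Pg n (n+m) (n+m) a j).mulVec (Ψ p))) •
              ((-((p.1 a - p.1 j)^2)⁻¹) • (fApp a - fApp j)))
            ((Pi.single a 1 : Fin (n+m) → ℂ), (0 : Fin (n+m) → ℂ))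
        = (p.1 a - p.1 j)⁻¹ * (κ⁻¹ * dotProduct Ω ((Pg n (n+m) (n+m) a j).mulVec
            ((kzB n (n+m) (n+m) p.1 p.2 a).mulVec (Ψ p))))
          - ((p.1 a - p.1 j)^2)⁻¹ *
              dotProduct Ω ((Pg n (n+m) (n+m) a j).mulVec (Ψ p)) := by
      intro j hj
      rw [ContinuousLinearMap.add_apply, ContinuousLinearMap.smul_apply,
        ContinuousLinearMap.smul_apply, ContinuousLinearMap.smul_apply,
        ContinuousLinearMap.comp_apply, dmCLM_apply,
        hDψw a, ContinuousLinearMap.sub_apply, hfval1 a, hfval0 a j hj,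
        Matrix.mulVec_smul, dotProduct_smul]
      simp only [smul_eq_mul, sub_zero, mul_one]
      ring
    rw [Finset.sum_congr rfl (fun c _ => hterm1 c),
      Finset.sum_congr rfl (fun j hj => hterm2 j (by
        simp only [Finset.mem_filter, Finset.mem_univ, true_and] at hj; exact hj)),
      ← Matrix.mulVec_mulVec, dot_kzB_expand]
    have e1 : ∑ c : Fin (n+m), p.2 c * (κ⁻¹ * dotProduct Ω
          ((eop n (n+m) (n+m) a c c).mulVec
            ((kzB n (n+m) (n+m) p.1 p.2 a).mulVec (Ψ p))))
        = κ⁻¹ * ∑ c : Fin (n+m), p.2 c * dotProduct Ω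
            ((eop n (n+m) (n+m) a c c).mulVec
              ((kzB n (n+m) (n+m) p.1 p.2 a).mulVec (Ψ p))) := by
      rw [Finset.mul_sum]
      apply Finset.sum_congr rfl
      intro c _
      ring
    have e2 : ∑ j ∈ Finset.univ.filter (fun j => j ≠ a),
          ((p.1 a - p.1 j)⁻¹ * (κ⁻¹ * dotProduct Ω
              ((Pg n (n+m) (n+m) a j).mulVec
                ((kzB n (n+m) (n+m) p.1 p.2 a).mulVec (Ψ p))))
            - ((p.1 a - p.1 j)^2)⁻¹ *
                dotProduct Ω ((Pg n (n+m) (n+m) a j).mulVec (Ψ p)))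
        = κ⁻¹ * (∑ j ∈ Finset.univ.filter (fun j => j ≠ a),
            (p.1 a - p.1 j)⁻¹ * dotProduct Ω
              ((Pg n (n+m) (n+m) a j).mulVec
                ((kzB n (n+m) (n+m) p.1 p.2 a).mulVec (Ψ p))))
          - ∑ j ∈ Finset.univ.filter (fun j => j ≠ a),
              ((p.1 a - p.1 j)^2)⁻¹ *
                dotProduct Ω ((Pg n (n+m) (n+m) a j).mulVec (Ψ p)) := by
      rw [Finset.sum_sub_distrib, Finset.mul_sum]
      congr 1
      apply Finset.sum_congr rfl
      intro j _
      ring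
    rw [e1, e2]
    set A1 := ∑ c : Fin (n+m), p.2 c * dotProduct Ω
            ((eop n (n+m) (n+m) a c c).mulVec
              ((kzB n (n+m) (n+m) p.1 p.2 a).mulVec (Ψ p))) with hA1
    set B1 := ∑ j ∈ Finset.univ.filter (fun j => j ≠ a),
            (p.1 a - p.1 j)⁻¹ * dotProduct Ω
              ((Pg n (n+m) (n+m) a j).mulVec
                ((kzB n (n+m) (n+m) p.1 p.2 a).mulVec (Ψ p))) with hB1
    set C1 := ∑ j ∈ Finset.univ.filter (fun j => j ≠ a),
              ((p.1 a - p.1 j)^2)⁻¹ *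
                dotProduct Ω ((Pg n (n+m) (n+m) a j).mulVec (Ψ p)) with hC1
    have hk : κ * κ⁻¹ = 1 := mul_inv_cancel₀ hκ
    linear_combination ((A1 + B1) * (κ * κ⁻¹ + 1) - C1 * κ) * hk
  -- assemble
  set φv := dotProduct Ω (Ψ p) with hφv
  set S := ∑ a : Fin (n+m), ∑ j ∈ Finset.univ.filter (fun j => j ≠ a),
      ((p.1 a - p.1 j)^2)⁻¹ with hS
  have hSconv : ∑ a : Fin (n+m), ∑ j ∈ Finset.univ.filter (fun j => j ≠ a),
        ((p.1 a - p.1 j)⁻¹)^2 = S := by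
    rw [hS]
    apply Finset.sum_congr rfl
    intro a _
    apply Finset.sum_congr rfl
    intro j _
    rw [inv_pow]
  have hcore := core ρ hρ i p.1 p.2 hp.1 (Ψ p) (fun c => hwt p hp c)
  rw [hSconv] at hcore
  have hpg : ∀ a j : Fin (n+m), j ≠ a →
      dotProduct Ω ((Pg n (n+m) (n+m) a j).mulVec (Ψ p))
        = (-1:ℂ)^i * φv :=
    fun a j hj => dot_omega_pg ρ hρ i a j (Ne.symm hj) (Ψ p)
  have hmain : κ ^ 2 * (∑ a : Fin (n + m),
      fderiv ℂ (fun q =>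
          fderiv ℂ (fun r => dotProduct Ω (Ψ r)) q
            ((Pi.single a 1 : Fin (n+m) → ℂ), (0 : Fin (n+m) → ℂ))) p
        ((Pi.single a 1 : Fin (n+m) → ℂ), (0 : Fin (n+m) → ℂ)))
      = ∑ a : Fin (n+m), (κ^2 * (fderiv ℂ (G a) p
          ((Pi.single a 1 : Fin (n+m) → ℂ), (0 : Fin (n+m) → ℂ)))) := by
    rw [Finset.mul_sum]
    apply Finset.sum_congr rfl
    intro a _
    rw [hD2 a]
  rw [hmain]
  simp only [hκ2D2]
  rw [Finset.sum_sub_distrib, hcore]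
  have hYsum : ∑ a : Fin (n+m), (κ * ∑ j ∈ Finset.univ.filter (fun j => j ≠ a),
        ((p.1 a - p.1 j)^2)⁻¹ *
          dotProduct Ω ((Pg n (n+m) (n+m) a j).mulVec (Ψ p)))
      = (κ * (-1:ℂ)^i * φv) * S := by
    have hpt : ∀ a : Fin (n+m), κ * ∑ j ∈ Finset.univ.filter (fun j => j ≠ a),
          ((p.1 a - p.1 j)^2)⁻¹ *
            dotProduct Ω ((Pg n (n+m) (n+m) a j).mulVec (Ψ p))
        = (κ * (-1:ℂ)^i * φv) * ∑ j ∈ Finset.univ.filter (fun j => j ≠ a),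
            ((p.1 a - p.1 j)^2)⁻¹ := by
      intro a
      rw [Finset.mul_sum, Finset.mul_sum]
      apply Finset.sum_congr rfl
      intro j hj
      simp only [Finset.mem_filter, Finset.mem_univ, true_and] at hj
      rw [hpg a j hj]
      ring
    rw [Finset.sum_congr rfl (fun a _ => hpt a), ← Finset.mul_sum, hS]
  rw [hYsum]
  have hcoef : ∑ a : Fin (n + m), ∑ b ∈ Finset.univ.filter (fun b : Fin (n + m) => b ≠ a),
        ((-1 : ℂ) ^ i * κ - 1) / (p.1 a - p.1 b) ^ 2
      = ((-1 : ℂ) ^ i * κ - 1) * S := by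
    have hpt : ∀ a : Fin (n+m),
        ∑ b ∈ Finset.univ.filter (fun b : Fin (n + m) => b ≠ a),
          ((-1 : ℂ) ^ i * κ - 1) / (p.1 a - p.1 b) ^ 2
        = ((-1 : ℂ) ^ i * κ - 1) * ∑ b ∈ Finset.univ.filter (fun b => b ≠ a),
            ((p.1 a - p.1 b)^2)⁻¹ := by
      intro a
      rw [Finset.mul_sum]
      apply Finset.sum_congr rfl
      intro b _
      rw [div_eq_mul_inv]
    rw [Finset.sum_congr rfl (fun a _ => hpt a), ← Finset.mul_sum, hS]
  rw [hcoef]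
  ring
end
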